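/- arXiv:1801.00107 — 4 statements merged into one kernel-verified Lean document; each statement's English description precedes it below -/
import Mathlib

section
/- Let B be a positive bounded operator on a complex Hilbert space H, and let E be the set of extreme points of the operator interval [0,B]. Then E, with the Loewner order, is a lattice: for all C, D ∈ E there exists M ∈ E with M ≤ C, M ≤ D, and G ≤ M for every G ∈ E with G ≤ C and G ≤ D; and there exists N ∈ E with C ≤ N, D ≤ N, and N ≤ G for every G ∈ E with C ≤ G and D ≤ G. -/
open scoped ComplexOrder

/-- `A` is a positive operator: `⟪A x, x⟫ ≥ 0` for all `x`. -/
def IsPosOp {H : Type*} [NormedAddCommGroup H] [InnerProductSpace ℂ H]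
    (A : H →L[ℂ] H) : Prop :=
  ∀ x : H, 0 ≤ (inner ℂ (A x) x : ℂ)

/-- The Loewner order: `A ≤ B` iff `B - A` is positive. -/
def OpLe {H : Type*} [NormedAddCommGroup H] [InnerProductSpace ℂ H]
    (A B : H →L[ℂ] H) : Prop :=
  IsPosOp (B - A)

/-- The quadratic form of an operator: `A[x] = re ⟪A x, x⟫`. -/
noncomputable def QF {H : Type*} [NormedAddCommGroup H] [InnerProductSpace ℂ H]
    (A : H →L[ℂ] H) (x : H) : ℝ :=
  (inner ℂ (A x) x : ℂ).re

/-- `A` and `B` are singular: the only positive operator below both is `0`. -/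
def SingOp {H : Type*} [NormedAddCommGroup H] [InnerProductSpace ℂ H]
    (A B : H →L[ℂ] H) : Prop :=
  ∀ C : H →L[ℂ] H, IsPosOp C → OpLe C A → OpLe C B → C = 0

/-- `B` is `A`-absolutely continuous: `B` is the strong limit of a monotone increasing
sequence of positive operators, each dominated by a nonnegative multiple of `A`. -/
def AbsCont {H : Type*} [NormedAddCommGroup H] [InnerProductSpace ℂ H]
    (B A : H →L[ℂ] H) : Prop :=
  ∃ Bn : ℕ → H →L[ℂ] H,
    (∀ n, IsPosOp (Bn n)) ∧
    (∀ m n, m ≤ n → OpLe (Bn m) (Bn n)) ∧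
    (∀ n, ∃ c : ℝ, 0 ≤ c ∧ OpLe (Bn n) (c • A)) ∧
    (∀ x : H, Filter.Tendsto (fun n => Bn n x) Filter.atTop (nhds (B x)))

/-- `S = [A]B`: the quadratic form of `S` is `sup_n inf_y (B[x-y] + n·A[y])`. -/
def IsShort {H : Type*} [NormedAddCommGroup H] [InnerProductSpace ℂ H]
    (A B S : H →L[ℂ] H) : Prop :=
  ∀ x : H, QF S x = ⨆ n : ℕ, ⨅ y : H, (QF B (x - y) + (n : ℝ) * QF A y)

set_option synthInstance.maxHeartbeats 1000000
set_option maxHeartbeats 1000000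
set_option linter.unusedSectionVars false

namespace AndoLattice
open ContinuousLinearMap
variable {H : Type*} [NormedAddCommGroup H] [InnerProductSpace ℂ H] [CompleteSpace H]

lemma isPosOp_iff_nonneg (A : H →L[ℂ] H) : IsPosOp A ↔ 0 ≤ A := by
  rw [ContinuousLinearMap.nonneg_iff_isPositive, ContinuousLinearMap.isPositive_iff_complex]
  unfold IsPosOp
  refine forall_congr' fun x => ?_
  rw [Complex.le_def]
  constructor
  · rintro ⟨h1, h2⟩
    exact ⟨by simp [Complex.ext_iff, ← h2], by simpa using h1⟩
  · rintro ⟨h1, h2⟩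
    refine ⟨by simpa using h2, ?_⟩
    have := congrArg Complex.im h1
    simp at this
    simp [this]
  

lemma opLe_iff_le (A B : H →L[ℂ] H) : OpLe A B ↔ A ≤ B := by
  rw [OpLe, isPosOp_iff_nonneg, sub_nonneg]

lemma quad_nonneg {A : H →L[ℂ] H} (hA : 0 ≤ A) (x : H) :
    0 ≤ (RCLike.re (inner ℂ (A x) x : ℂ) : ℝ) :=
  ((ContinuousLinearMap.nonneg_iff_isPositive A).mp hA).re_inner_nonneg_left x

lemma symm_of_sa {A : H →L[ℂ] H} (hA : IsSelfAdjoint A) (x y : H) :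
    (inner ℂ (A x) y : ℂ) = inner ℂ x (A y) :=
  ((ContinuousLinearMap.isSelfAdjoint_iff_isSymmetric).mp hA) x y

/-- A positive operator with vanishing quadratic form at `x` kills `x`. -/
lemma apply_eq_zero_of_quad_zero {T : H →L[ℂ] H} (hT : 0 ≤ T) {x : H}
    (hx : RCLike.re (inner ℂ (T x) x : ℂ) = 0) : T x = 0 := by
  set t := CFC.sqrt T with ht
  have htt : t * t = T := CFC.sqrt_mul_sqrt_self T hT
  have htsa : IsSelfAdjoint t := IsSelfAdjoint.of_nonneg (CFC.sqrt_nonneg _)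
  have h1 : (inner ℂ (T x) x : ℂ) = inner ℂ (t x) (t x) := by
    conv_lhs => rw [← htt]
    exact symm_of_sa htsa (t x) x
  have h2 : ‖t x‖ ^ 2 = 0 := by
    rw [← inner_self_eq_norm_sq (𝕜 := ℂ), ← h1]
    exact hx
  have h3 : t x = 0 := by simpa using h2
  calc T x = t (t x) := by rw [← htt]; rfl
  _ = 0 := by rw [h3, map_zero]

end AndoLattice

set_option linter.unusedSectionVars false
namespace AndoLattice
open ContinuousLinearMap
variable {H : Type*} [NormedAddCommGroup H] [InnerProductSpace ℂ H] [CompleteSpace H]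
variable (r : H →L[ℂ] H)

noncomputable def Ksub : Submodule ℂ H := (LinearMap.range (r : H →ₗ[ℂ] H)).topologicalClosure

instance : CompleteSpace (Ksub r) :=
  (Submodule.isClosed_topologicalClosure _).completeSpace_coe

noncomputable def pK : H →L[ℂ] H := (Ksub r).subtypeL ∘L Submodule.orthogonalProjection (Ksub r)

lemma mem_K (x : H) : r x ∈ Ksub r :=
  Submodule.le_topologicalClosure _ (LinearMap.mem_range_self (r : H →ₗ[ℂ] H) x)

lemma pK_of_mem {u : H} (hu : u ∈ Ksub r) : pK r u = u := by
  show ((Submodule.orthogonalProjection (Ksub r) u : Ksub r) : H) = u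
  rw [show u = ((⟨u, hu⟩ : Ksub r) : H) from rfl, Submodule.orthogonalProjection_mem_subspace_eq_self]

lemma pK_mem (x : H) : pK r x ∈ Ksub r := (Submodule.orthogonalProjection (Ksub r) x).2

lemma pK_sa : IsSelfAdjoint (pK r) := isSelfAdjoint_starProjection _

lemma pK_idem : pK r * pK r = pK r := by
  ext x
  exact pK_of_mem r (pK_mem r x)

lemma pK_norm_le (x : H) : ‖pK r x‖ ≤ ‖x‖ := by
  show ‖((Submodule.orthogonalProjection (Ksub r) x : Ksub r) : H)‖ ≤ ‖x‖
  rw [Submodule.norm_coe]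
  simpa using (Submodule.orthogonalProjection (Ksub r)).le_of_opNorm_le (Submodule.orthogonalProjection_norm_le _) x

lemma pK_mul_r : pK r * r = r := by
  ext x
  exact pK_of_mem r (mem_K r x)

lemma r_mul_pK (hr : IsSelfAdjoint r) : r * pK r = r := by
  have := congrArg star (pK_mul_r r)
  rwa [star_mul, (pK_sa r).star_eq, hr.star_eq] at this

lemma nonneg_of_conj_nonneg (hr : IsSelfAdjoint r) {S : H →L[ℂ] H} (hS : IsSelfAdjoint S)
    (hsupp : pK r * S * pK r = S) (h : 0 ≤ r * S * r) : 0 ≤ S := by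
  rw [ContinuousLinearMap.nonneg_iff_isPositive]
  refine ⟨isSelfAdjoint_iff_isSymmetric.mp hS, fun x => ?_⟩
  have key : ∀ u ∈ Ksub r, 0 ≤ RCLike.re (inner ℂ (S u) u : ℂ) := by
    have hcont : Continuous fun u : H => RCLike.re (inner ℂ (S u) u : ℂ) :=
      (RCLike.continuous_re.comp (continuous_inner.comp ((S.continuous.comp continuous_id).prodMk continuous_id)))
    have hclosed : IsClosed {u : H | 0 ≤ RCLike.re (inner ℂ (S u) u : ℂ)} :=
      isClosed_le continuous_const hcont
    have hran : Set.range r ⊆ {u : H | 0 ≤ RCLike.re (inner ℂ (S u) u : ℂ)} := by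
      rintro _ ⟨y, rfl⟩
      have h0 := quad_nonneg h y
      have heq : (inner ℂ ((r * S * r) y) y : ℂ) = inner ℂ (S (r y)) (r y) := by
        show (inner ℂ (r (S (r y))) y : ℂ) = inner ℂ (S (r y)) (r y)
        exact symm_of_sa hr (S (r y)) y
      rw [heq] at h0
      exact h0
    intro u hu
    have hcl : u ∈ closure (Set.range r) := by
      have hc : (Ksub r : Set H) = closure (LinearMap.range (r : H →ₗ[ℂ] H) : Set H) :=
        Submodule.topologicalClosure_coe _
      rw [show Set.range r = (LinearMap.range (r : H →ₗ[ℂ] H) : Set H) from (LinearMap.coe_range _).symm, ← hc]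
      exact hu
    exact closure_minimal hran hclosed hcl
  have hx : S x = pK r (S (pK r x)) := by
    conv_lhs => rw [← hsupp]
    rfl
  show 0 ≤ RCLike.re (inner ℂ (S x) x : ℂ)
  rw [hx, symm_of_sa (pK_sa r) (S (pK r x)) x]
  exact key _ (pK_mem r x)

lemma conj_le_conj (hr : IsSelfAdjoint r) {S T : H →L[ℂ] H} (h : S ≤ T) :
    r * S * r ≤ r * T * r := by
  have h0 : 0 ≤ star r * (T - S) * r := star_left_conjugate_nonneg (sub_nonneg.mpr h) r
  rw [hr.star_eq] at h0
  have : r * (T - S) * r = r * T * r - r * S * r := by noncomm_ring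
  rw [this] at h0
  exact sub_nonneg.mp h0

lemma le_of_conj_le (hr : IsSelfAdjoint r) {S T : H →L[ℂ] H}
    (hS : IsSelfAdjoint S) (hT : IsSelfAdjoint T)
    (hsuppS : pK r * S * pK r = S) (hsuppT : pK r * T * pK r = T)
    (h : r * S * r ≤ r * T * r) : S ≤ T := by
  have hsa : IsSelfAdjoint (T - S) := hT.sub hS
  have hsupp : pK r * (T - S) * pK r = T - S := by
    have : pK r * (T - S) * pK r = pK r * T * pK r - pK r * S * pK r := by noncomm_ring
    rw [this, hsuppS, hsuppT]
  have h0 : 0 ≤ r * (T - S) * r := by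
    have : r * (T - S) * r = r * T * r - r * S * r := by noncomm_ring
    rw [this]
    exact sub_nonneg.mpr h
  exact sub_nonneg.mp (nonneg_of_conj_nonneg r hr hsa hsupp h0)

end AndoLattice

namespace AndoLattice
open ContinuousLinearMap
variable {H : Type*} [NormedAddCommGroup H] [InnerProductSpace ℂ H] [CompleteSpace H]
variable (r : H →L[ℂ] H)

lemma douglas (hr : IsSelfAdjoint r) {A : H →L[ℂ] H} (hA : 0 ≤ A) (hAB : A ≤ r * r) :
    ∃ T : H →L[ℂ] H, 0 ≤ T ∧ T ≤ 1 ∧ pK r * T * pK r = T ∧ r * T * r = A := by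
  classical
  set s := CFC.sqrt A with hsdef
  have hss : s * s = A := CFC.sqrt_mul_sqrt_self A hA
  have hssa : IsSelfAdjoint s := IsSelfAdjoint.of_nonneg (CFC.sqrt_nonneg _)
  have hquad : ∀ (t : H →L[ℂ] H), IsSelfAdjoint t → ∀ x : H,
      ‖t x‖ ^ 2 = RCLike.re (inner ℂ ((t * t) x) x : ℂ) := by
    intro t ht x
    rw [← inner_self_eq_norm_sq (𝕜 := ℂ) (t x)]
    congr 1
    exact (symm_of_sa ht (t x) x).symm
  have hbound : ∀ x : H, ‖s x‖ ≤ ‖r x‖ := by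
    intro x
    have h1 := hquad s hssa x
    have h2 := hquad r hr x
    rw [hss] at h1
    have h3 := quad_nonneg (sub_nonneg.mpr hAB) x
    have h4 : (inner ℂ ((r * r - A) x) x : ℂ) = inner ℂ ((r * r) x) x - inner ℂ (A x) x := by
      rw [ContinuousLinearMap.sub_apply, inner_sub_left]
    rw [h4, map_sub] at h3
    nlinarith [norm_nonneg (s x), norm_nonneg (r x)]
  have hker : ∀ {x y : H}, r x = r y → s x = s y := by
    intro x y h
    have h1 : ‖s (x - y)‖ ≤ ‖r (x - y)‖ := hbound _
    rw [map_sub, map_sub, h, sub_self, norm_zero] at h1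
    have := le_antisymm h1 (norm_nonneg _)
    rw [norm_eq_zero] at this
    exact sub_eq_zero.mp this
  let pick : LinearMap.range (r : H →ₗ[ℂ] H) → H := fun v => (LinearMap.mem_range.mp v.2).choose
  have hpick : ∀ v : LinearMap.range (r : H →ₗ[ℂ] H), r (pick v) = (v : H) := fun v =>
    (LinearMap.mem_range.mp v.2).choose_spec
  have hf0 : ∀ (v : LinearMap.range (r : H →ₗ[ℂ] H)) (x : H), r x = (v : H) → s (pick v) = s x :=
    fun v x hx => hker ((hpick v).trans hx.symm)
  let flin : LinearMap.range (r : H →ₗ[ℂ] H) →ₗ[ℂ] H :=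
    { toFun := fun v => s (pick v)
      map_add' := by
        intro v w
        have h1 : r (pick v + pick w) = ((v + w : LinearMap.range (r : H →ₗ[ℂ] H)) : H) := by
          rw [map_add, hpick, hpick]; rfl
        show s (pick (v + w)) = s (pick v) + s (pick w)
        rw [hf0 (v + w) (pick v + pick w) h1, map_add]
      map_smul' := by
        intro c v
        have h1 : r (c • pick v) = ((c • v : LinearMap.range (r : H →ₗ[ℂ] H)) : H) := by
          rw [map_smul, hpick]; rfl
        show s (pick (c • v)) = (RingHom.id ℂ) c • s (pick v)
        rw [hf0 (c • v) (c • pick v) h1, map_smul]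
        rfl }
  have hflin : ∀ v : LinearMap.range (r : H →ₗ[ℂ] H), ‖flin v‖ ≤ 1 * ‖v‖ := by
    intro v
    rw [one_mul]
    calc ‖s (pick v)‖ ≤ ‖r (pick v)‖ := hbound _
    _ = ‖(v : H)‖ := by rw [hpick]
    _ = ‖v‖ := (Submodule.norm_coe v).symm ▸ rfl
  let F : LinearMap.range (r : H →ₗ[ℂ] H) →L[ℂ] H := flin.mkContinuous 1 hflin
  let elin : LinearMap.range (r : H →ₗ[ℂ] H) →ₗ[ℂ] Ksub r :=
    Submodule.inclusion (Submodule.le_topologicalClosure _)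
  have helin : ∀ v : LinearMap.range (r : H →ₗ[ℂ] H), ‖elin v‖ = ‖v‖ := fun v => rfl
  let e : LinearMap.range (r : H →ₗ[ℂ] H) →L[ℂ] Ksub r :=
    elin.mkContinuous 1 (fun v => by rw [helin, one_mul])
  have h_e : IsUniformInducing e :=
    (AddMonoidHomClass.isometry_of_norm e (fun v => helin v)).isUniformInducing
  have h_dense : DenseRange e := by
    intro k
    rw [Metric.mem_closure_iff]
    intro ε hε
    have hu : (k : H) ∈ closure (Set.range r) := by
      have hc : (Ksub r : Set H) = closure (LinearMap.range (r : H →ₗ[ℂ] H) : Set H) :=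
        Submodule.topologicalClosure_coe _
      rw [show Set.range r = (LinearMap.range (r : H →ₗ[ℂ] H) : Set H) from (LinearMap.coe_range _).symm, ← hc]
      exact k.2
    obtain ⟨v, hv, hdist⟩ := Metric.mem_closure_iff.mp hu ε hε
    obtain ⟨y, rfl⟩ := hv
    refine ⟨e ⟨r y, LinearMap.mem_range_self (r : H →ₗ[ℂ] H) y⟩, ⟨_, rfl⟩, ?_⟩
    rw [Subtype.dist_eq]
    exact hdist
  let g : Ksub r →L[ℂ] H := F.extend e
  have hg : ∀ v : LinearMap.range (r : H →ₗ[ℂ] H), g (e v) = F v := fun v =>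
    ContinuousLinearMap.extend_eq F h_dense h_e v
  let C : H →L[ℂ] H := g ∘L Submodule.orthogonalProjection (Ksub r)
  have hproj_mem : ∀ (u : H) (hu : u ∈ Ksub r), Submodule.orthogonalProjection (Ksub r) u = ⟨u, hu⟩ := by
    intro u hu
    exact Submodule.orthogonalProjection_mem_subspace_eq_self (⟨u, hu⟩ : Ksub r)
  have hCr : C * r = s := by
    ext x
    show g (Submodule.orthogonalProjection (Ksub r) (r x)) = s x
    rw [hproj_mem (r x) (mem_K r x)]
    have h2 : (⟨r x, mem_K r x⟩ : Ksub r) = e ⟨r x, LinearMap.mem_range_self (r : H →ₗ[ℂ] H) x⟩ := rfl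
    rw [h2, hg]
    exact hf0 _ x rfl
  have hgnorm : ∀ k : Ksub r, ‖g k‖ ≤ ‖k‖ := by
    have hclosed : IsClosed {k : Ksub r | ‖g k‖ ≤ ‖k‖} :=
      isClosed_le (continuous_norm.comp g.continuous) continuous_norm
    intro k
    refine h_dense.induction_on k hclosed ?_
    intro v
    show ‖g (e v)‖ ≤ ‖e v‖
    rw [hg]
    calc ‖F v‖ ≤ ‖F‖ * ‖v‖ := F.le_opNorm v
    _ ≤ 1 * ‖v‖ := by
      have := flin.mkContinuous_norm_le zero_le_one hflin
      exact mul_le_mul_of_nonneg_right this (norm_nonneg v)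
    _ = ‖e v‖ := by rw [one_mul]; exact (helin v).symm
  have hCnorm : ∀ x : H, ‖C x‖ ≤ ‖x‖ := by
    intro x
    calc ‖C x‖ = ‖g (Submodule.orthogonalProjection (Ksub r) x)‖ := rfl
    _ ≤ ‖Submodule.orthogonalProjection (Ksub r) x‖ := hgnorm _
    _ = ‖pK r x‖ := (Submodule.norm_coe _).symm
    _ ≤ ‖x‖ := pK_norm_le r x
  have hCpK : C * pK r = C := by
    ext x
    show g (Submodule.orthogonalProjection (Ksub r) (pK r x)) = g (Submodule.orthogonalProjection (Ksub r) x)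
    congr 1
    rw [hproj_mem (pK r x) (pK_mem r x)]
    exact Subtype.ext rfl
  refine ⟨star C * C, star_mul_self_nonneg C, ?_, ?_, ?_⟩
  · rw [ContinuousLinearMap.le_def]
    refine ⟨isSelfAdjoint_iff_isSymmetric.mp ((IsSelfAdjoint.one (R := H →L[ℂ] H)).sub (IsSelfAdjoint.star_mul_self C)), fun x => ?_⟩
    have hre : (1 - star C * C).reApplyInnerSelf x = ‖x‖ ^ 2 - ‖C x‖ ^ 2 := by
      show RCLike.re (inner ℂ ((1 - star C * C) x) x : ℂ) = _
      rw [ContinuousLinearMap.sub_apply, ContinuousLinearMap.one_apply, inner_sub_left,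
        ContinuousLinearMap.mul_apply, ContinuousLinearMap.star_eq_adjoint,
        ContinuousLinearMap.adjoint_inner_left, map_sub,
        inner_self_eq_norm_sq (𝕜 := ℂ), inner_self_eq_norm_sq (𝕜 := ℂ)]
    rw [hre]
    have := hCnorm x
    nlinarith [norm_nonneg (C x), norm_nonneg x]
  · have h1 : pK r * star C = star C := by
      have := congrArg star hCpK
      rwa [star_mul, (pK_sa r).star_eq] at this
    calc pK r * (star C * C) * pK r = (pK r * star C) * (C * pK r) := by noncomm_ring
    _ = star C * C := by rw [h1, hCpK]
  · have h2 : r * (star C * C) * r = star (C * r) * (C * r) := by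
      rw [star_mul, hr.star_eq]; noncomm_ring
    rw [h2, hCr, hssa.star_eq, hss]
end AndoLattice

namespace AndoLattice
open ContinuousLinearMap
variable {H : Type*} [NormedAddCommGroup H] [InnerProductSpace ℂ H] [CompleteSpace H]
variable (r : H →L[ℂ] H)

lemma supp_left {T : H →L[ℂ] H} (h : pK r * T * pK r = T) : pK r * T = T := by
  conv_lhs => rw [← h]
  calc pK r * (pK r * T * pK r) = (pK r * pK r) * T * pK r := by noncomm_ring
  _ = pK r * T * pK r := by rw [pK_idem]
  _ = T := h

lemma supp_right {T : H →L[ℂ] H} (h : pK r * T * pK r = T) : T * pK r = T := by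
  conv_lhs => rw [← h]
  calc (pK r * T * pK r) * pK r = pK r * T * (pK r * pK r) := by noncomm_ring
  _ = pK r * T * pK r := by rw [pK_idem]
  _ = T := h

lemma supp_mul {S T : H →L[ℂ] H} (hS : pK r * S * pK r = S) (hT : pK r * T * pK r = T) :
    pK r * (S * T) * pK r = S * T := by
  calc pK r * (S * T) * pK r = (pK r * S) * (T * pK r) := by noncomm_ring
  _ = S * T := by rw [supp_left r hS, supp_right r hT]

lemma eq_of_conj_eq (hr : IsSelfAdjoint r) {S T : H →L[ℂ] H}
    (hS : IsSelfAdjoint S) (hT : IsSelfAdjoint T)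
    (hsuppS : pK r * S * pK r = S) (hsuppT : pK r * T * pK r = T)
    (h : r * S * r = r * T * r) : S = T :=
  le_antisymm (le_of_conj_le r hr hS hT hsuppS hsuppT h.le)
    (le_of_conj_le r hr hT hS hsuppT hsuppS h.ge)

lemma conj_mem01 (hr : IsSelfAdjoint r) {X : H →L[ℂ] H} (hX0 : 0 ≤ X) (hX1 : X ≤ 1) :
    0 ≤ r * X * r ∧ r * X * r ≤ r * r := by
  constructor
  · have := star_left_conjugate_nonneg hX0 r
    rwa [hr.star_eq] at this
  · have h := conj_le_conj r hr hX1
    rwa [mul_one] at h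

lemma le_pK_of_le_one {T : H →L[ℂ] H} (hTsa : IsSelfAdjoint T) (hT1 : T ≤ 1)
    (hTsupp : pK r * T * pK r = T) : T ≤ pK r := by
  rw [ContinuousLinearMap.le_def]
  refine ⟨isSelfAdjoint_iff_isSymmetric.mp ((pK_sa r).sub hTsa), fun x => ?_⟩
  show 0 ≤ RCLike.re (inner ℂ ((pK r - T) x) x : ℂ)
  have h1 : (inner ℂ (T x) x : ℂ) = inner ℂ (T (pK r x)) (pK r x) := by
    conv_lhs => rw [← hTsupp]
    show (inner ℂ (pK r (T (pK r x))) x : ℂ) = _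
    rw [symm_of_sa (pK_sa r)]
  have h2 : (inner ℂ (pK r x) x : ℂ) = inner ℂ (pK r x) (pK r x) := by
    conv_lhs => rw [← pK_of_mem r (pK_mem r x)]
    rw [symm_of_sa (pK_sa r)]
  have h3 := quad_nonneg (sub_nonneg.mpr hT1) (pK r x)
  have h4 : (inner ℂ ((1 - T) (pK r x)) (pK r x) : ℂ)
      = inner ℂ (pK r x) (pK r x) - inner ℂ (T (pK r x)) (pK r x) := by
    rw [ContinuousLinearMap.sub_apply, ContinuousLinearMap.one_apply, inner_sub_left]
  rw [h4, map_sub] at h3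
  have h5 : (inner ℂ ((pK r - T) x) x : ℂ) = inner ℂ (pK r x) x - inner ℂ (T x) x := by
    rw [ContinuousLinearMap.sub_apply, inner_sub_left]
  rw [h5, map_sub, h1, h2]
  linarith

end AndoLattice

namespace AndoLattice
open ContinuousLinearMap
variable {H : Type*} [NormedAddCommGroup H] [InnerProductSpace ℂ H] [CompleteSpace H]

lemma extreme_rep {B : H →L[ℂ] H} (hB : 0 ≤ B) {A : H →L[ℂ] H}
    (hE : A ∈ Set.extremePoints ℝ {A : H →L[ℂ] H | IsPosOp A ∧ OpLe A B}) :
    ∃ P : H →L[ℂ] H, IsSelfAdjoint P ∧ P * P = P ∧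
      pK (CFC.sqrt B) * P * pK (CFC.sqrt B) = P ∧ CFC.sqrt B * P * CFC.sqrt B = A := by
  set r := CFC.sqrt B with hrdef
  have hr : IsSelfAdjoint r := IsSelfAdjoint.of_nonneg (CFC.sqrt_nonneg _)
  have hrr : r * r = B := CFC.sqrt_mul_sqrt_self B hB
  obtain ⟨⟨hA0', hAB'⟩, hext⟩ := hE
  rw [isPosOp_iff_nonneg] at hA0'
  rw [opLe_iff_le] at hAB'
  obtain ⟨T, hT0, hT1, hTsupp, hTA⟩ := douglas r hr hA0' (hrr ▸ hAB')
  have hTsa : IsSelfAdjoint T := IsSelfAdjoint.of_nonneg hT0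
  have hTTsa : IsSelfAdjoint (T * T) := by
    have := IsSelfAdjoint.star_mul_self T
    rwa [hTsa.star_eq] at this
  set S := T - T * T with hSdef
  have hSsa : IsSelfAdjoint S := hTsa.sub hTTsa
  have hS0 : 0 ≤ S := by
    set t := CFC.sqrt T with htdef
    have htt : t * t = T := CFC.sqrt_mul_sqrt_self T hT0
    have htsa : IsSelfAdjoint t := IsSelfAdjoint.of_nonneg (CFC.sqrt_nonneg _)
    have key : t * (1 - t * t) * t = t * t - (t * t) * (t * t) := by noncomm_ring
    rw [htt] at key
    have h0 : 0 ≤ star t * (1 - T) * t := star_left_conjugate_nonneg (sub_nonneg.mpr hT1) t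
    rwa [htsa.star_eq, key] at h0
  have hSsupp : pK r * S * pK r = S := by
    have h1 : pK r * S * pK r = pK r * T * pK r - pK r * (T * T) * pK r := by
      rw [hSdef]; noncomm_ring
    rw [h1, hTsupp, supp_mul r hTsupp hTsupp]
  -- the two perturbed operators
  have hXp0 : 0 ≤ T + S := add_nonneg hT0 hS0
  have hXp1 : T + S ≤ 1 := by
    have h2 : (1 : H →L[ℂ] H) - (T + S) = (1 - T) * (1 - T) := by
      rw [hSdef]; noncomm_ring
    have h3 := star_mul_self_nonneg ((1 : H →L[ℂ] H) - T)
    rw [((IsSelfAdjoint.one (R := H →L[ℂ] H)).sub hTsa).star_eq] at h3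
    rw [← sub_nonneg, h2]
    exact h3
  have hXm0 : 0 ≤ T - S := by
    have h2 : T - S = T * T := by rw [hSdef]; noncomm_ring
    have h3 := star_mul_self_nonneg T
    rwa [hTsa.star_eq, ← h2] at h3
  have hXm1 : T - S ≤ 1 := le_trans (sub_le_self T hS0) hT1
  obtain ⟨hAp0, hApB⟩ := conj_mem01 r hr hXp0 hXp1
  obtain ⟨hAm0, hAmB⟩ := conj_mem01 r hr hXm0 hXm1
  have hmemp : r * (T + S) * r ∈ {A : H →L[ℂ] H | IsPosOp A ∧ OpLe A B} :=
    ⟨(isPosOp_iff_nonneg _).mpr hAp0, (opLe_iff_le _ _).mpr (by rw [← hrr]; exact hApB)⟩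
  have hmemm : r * (T - S) * r ∈ {A : H →L[ℂ] H | IsPosOp A ∧ OpLe A B} :=
    ⟨(isPosOp_iff_nonneg _).mpr hAm0, (opLe_iff_le _ _).mpr (by rw [← hrr]; exact hAmB)⟩
  have hseg : A ∈ openSegment ℝ (r * (T + S) * r) (r * (T - S) * r) := by
    refine ⟨1/2, 1/2, by norm_num, by norm_num, by norm_num, ?_⟩
    have hsum : r * (T + S) * r + r * (T - S) * r = A + A := by
      rw [← hTA]; noncomm_ring
    rw [← smul_add, hsum, ← two_smul ℝ A, smul_smul]
    norm_num
  have hp := hext hmemp hmemm hseg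
  have hrSr : r * S * r = 0 := by
    have : r * S * r = r * (T + S) * r - A := by rw [← hTA]; noncomm_ring
    rw [this, hp, sub_self]
  have hSzero : S = 0 := by
    refine le_antisymm ?_ ?_
    · have hneg : 0 ≤ -S := by
        refine nonneg_of_conj_nonneg r hr hSsa.neg ?_ ?_
        · rw [show pK r * -S * pK r = -(pK r * S * pK r) by noncomm_ring, hSsupp]
        · rw [show r * -S * r = -(r * S * r) by noncomm_ring, hrSr, neg_zero]
      exact neg_nonneg.mp hneg
    · exact nonneg_of_conj_nonneg r hr hSsa hSsupp (by rw [hrSr])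
  have hidem : T * T = T := by
    have := sub_eq_zero.mp (hSdef ▸ hSzero)
    exact this.symm
  exact ⟨T, hTsa, hidem, hTsupp, hTA⟩

end AndoLattice

namespace AndoLattice
open ContinuousLinearMap
variable {H : Type*} [NormedAddCommGroup H] [InnerProductSpace ℂ H] [CompleteSpace H]

lemma re_inner_smul_real (a : ℝ) (u x : H) :
    RCLike.re (inner ℂ (a • u) x : ℂ) = a * RCLike.re (inner ℂ u x : ℂ) := by
  rw [show a • u = (a : ℂ) • u from RCLike.real_smul_eq_coe_smul a u, inner_smul_left]
  simp

lemma proj_nonneg {P : H →L[ℂ] H} (hPsa : IsSelfAdjoint P) (hPidem : P * P = P) : 0 ≤ P := by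
  have := star_mul_self_nonneg P
  rwa [hPsa.star_eq, hPidem] at this

lemma proj_le_one {P : H →L[ℂ] H} (hPsa : IsSelfAdjoint P) (hPidem : P * P = P) : P ≤ 1 := by
  have h3 := star_mul_self_nonneg ((1 : H →L[ℂ] H) - P)
  rw [((IsSelfAdjoint.one (R := H →L[ℂ] H)).sub hPsa).star_eq] at h3
  have h2 : ((1 : H →L[ℂ] H) - P) * (1 - P) = 1 - P - P + P * P := by noncomm_ring
  rw [h2, hPidem] at h3
  have h4 : (1 : H →L[ℂ] H) - P - P + P = 1 - P := by abel
  rw [h4] at h3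
  exact sub_nonneg.mp h3

lemma rep_extreme {B : H →L[ℂ] H} (hB : 0 ≤ B) {P : H →L[ℂ] H}
    (hPsa : IsSelfAdjoint P) (hPidem : P * P = P)
    (hPsupp : pK (CFC.sqrt B) * P * pK (CFC.sqrt B) = P) :
    (CFC.sqrt B * P * CFC.sqrt B) ∈
      Set.extremePoints ℝ {A : H →L[ℂ] H | IsPosOp A ∧ OpLe A B} := by
  set r := CFC.sqrt B with hrdef
  have hr : IsSelfAdjoint r := IsSelfAdjoint.of_nonneg (CFC.sqrt_nonneg _)
  have hrr : r * r = B := CFC.sqrt_mul_sqrt_self B hB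
  have hP0 : 0 ≤ P := proj_nonneg hPsa hPidem
  have hP1 : P ≤ 1 := proj_le_one hPsa hPidem
  obtain ⟨hA0, hAB⟩ := conj_mem01 r hr hP0 hP1
  refine ⟨⟨(isPosOp_iff_nonneg _).mpr hA0, (opLe_iff_le _ _).mpr (by rw [← hrr]; exact hAB)⟩, ?_⟩
  rintro A₁ hA₁ A₂ hA₂ ⟨a, b, ha, hb, hab, hseq⟩
  obtain ⟨hA₁p, hA₁l⟩ := hA₁
  obtain ⟨hA₂p, hA₂l⟩ := hA₂
  rw [isPosOp_iff_nonneg] at hA₁p hA₂p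
  rw [opLe_iff_le] at hA₁l hA₂l
  obtain ⟨T₁, hT₁0, hT₁1, hT₁supp, hT₁A⟩ := douglas r hr hA₁p (by rw [hrr]; exact hA₁l)
  obtain ⟨T₂, hT₂0, hT₂1, hT₂supp, hT₂A⟩ := douglas r hr hA₂p (by rw [hrr]; exact hA₂l)
  have hT₁sa : IsSelfAdjoint T₁ := IsSelfAdjoint.of_nonneg hT₁0
  have hT₂sa : IsSelfAdjoint T₂ := IsSelfAdjoint.of_nonneg hT₂0
  set D := a • T₁ + b • T₂ with hDdef
  have hDsa : IsSelfAdjoint D :=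
    ((IsSelfAdjoint.all a).smul hT₁sa).add ((IsSelfAdjoint.all b).smul hT₂sa)
  have hDsupp : pK r * D * pK r = D := by
    rw [hDdef]
    simp only [mul_add, add_mul, mul_smul_comm, smul_mul_assoc]
    rw [hT₁supp, hT₂supp]
  have hDP : D = P := by
    refine eq_of_conj_eq r hr hDsa hPsa hDsupp hPsupp ?_
    have hexp : r * D * r = a • (r * T₁ * r) + b • (r * T₂ * r) := by
      rw [hDdef]
      simp only [mul_add, add_mul, mul_smul_comm, smul_mul_assoc]
    rw [hexp, hT₁A, hT₂A, hseq]
  -- quadratic form decomposition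
  have hquadD : ∀ x : H, RCLike.re (inner ℂ (P x) x : ℂ) =
      a * RCLike.re (inner ℂ (T₁ x) x : ℂ) + b * RCLike.re (inner ℂ (T₂ x) x : ℂ) := by
    intro x
    rw [← hDP, hDdef]
    have : ((a • T₁ + b • T₂) x) = a • T₁ x + b • T₂ x := rfl
    rw [this, inner_add_left, map_add, re_inner_smul_real, re_inner_smul_real]
  -- kernel of P is killed by both
  have hker : ∀ x : H, P x = 0 → T₁ x = 0 ∧ T₂ x = 0 := by
    intro x hx
    have h0 := hquadD x
    rw [hx, inner_zero_left, map_zero] at h0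
    have q1 := quad_nonneg hT₁0 x
    have q2 := quad_nonneg hT₂0 x
    have hz1 : RCLike.re (inner ℂ (T₁ x) x : ℂ) = 0 := by nlinarith
    have hz2 : RCLike.re (inner ℂ (T₂ x) x : ℂ) = 0 := by nlinarith
    exact ⟨apply_eq_zero_of_quad_zero hT₁0 hz1, apply_eq_zero_of_quad_zero hT₂0 hz2⟩
  -- range of P is fixed by both
  have hPK : ∀ y : H, pK r (P y) = P y := by
    intro y
    have h1 : P y = pK r ((P * pK r) y) := by
      conv_lhs => rw [← hPsupp]
      rfl
    rw [h1, pK_of_mem r (pK_mem r _)]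
  have hS₁ : T₁ ≤ pK r := le_pK_of_le_one r hT₁sa hT₁1 hT₁supp
  have hS₂ : T₂ ≤ pK r := le_pK_of_le_one r hT₂sa hT₂1 hT₂supp
  have hfix : ∀ y : H, T₁ (P y) = P y ∧ T₂ (P y) = P y := by
    intro y
    have hsum : a • (pK r - T₁) + b • (pK r - T₂) = pK r - P := by
      calc a • (pK r - T₁) + b • (pK r - T₂)
          = (a + b) • pK r - (a • T₁ + b • T₂) := by module
      _ = pK r - P := by rw [hab, one_smul, ← hDdef, hDP]
    have happ : (pK r - P) (P y) = 0 := by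
      rw [ContinuousLinearMap.sub_apply, hPK y]
      have : P (P y) = P y := by rw [← ContinuousLinearMap.mul_apply, hPidem]
      rw [this, sub_self]
    have hquad0 : RCLike.re (inner ℂ ((pK r - P) (P y)) (P y) : ℂ) = 0 := by
      rw [happ, inner_zero_left, map_zero]
    have hdecomp : RCLike.re (inner ℂ ((pK r - P) (P y)) (P y) : ℂ) =
        a * RCLike.re (inner ℂ ((pK r - T₁) (P y)) (P y) : ℂ) +
        b * RCLike.re (inner ℂ ((pK r - T₂) (P y)) (P y) : ℂ) := by
      conv_lhs => rw [← hsum]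
      have : ((a • (pK r - T₁) + b • (pK r - T₂)) (P y))
          = a • (pK r - T₁) (P y) + b • (pK r - T₂) (P y) := rfl
      rw [this, inner_add_left, map_add, re_inner_smul_real, re_inner_smul_real]
    have q1 := quad_nonneg (sub_nonneg.mpr hS₁) (P y)
    have q2 := quad_nonneg (sub_nonneg.mpr hS₂) (P y)
    rw [hdecomp] at hquad0
    have hz1 : RCLike.re (inner ℂ ((pK r - T₁) (P y)) (P y) : ℂ) = 0 := by nlinarith
    have hz2 : RCLike.re (inner ℂ ((pK r - T₂) (P y)) (P y) : ℂ) = 0 := by nlinarith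
    have e1 := apply_eq_zero_of_quad_zero (sub_nonneg.mpr hS₁) hz1
    have e2 := apply_eq_zero_of_quad_zero (sub_nonneg.mpr hS₂) hz2
    rw [ContinuousLinearMap.sub_apply, sub_eq_zero] at e1 e2
    exact ⟨by rw [← e1, hPK], by rw [← e2, hPK]⟩
  have hTP : ∀ i : Fin 2, True := fun _ => trivial
  have hT₁P : T₁ = P := by
    ext x
    have h1 : x = P x + (x - P x) := by abel
    have hk : P (x - P x) = 0 := by
      rw [map_sub, ← ContinuousLinearMap.mul_apply, hPidem, sub_self]
    calc T₁ x = T₁ (P x) + T₁ (x - P x) := by rw [← map_add, ← h1]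
    _ = P x + 0 := by rw [(hfix x).1, (hker _ hk).1]
    _ = P x := by rw [add_zero]
  have hT₂P : T₂ = P := by
    ext x
    have h1 : x = P x + (x - P x) := by abel
    have hk : P (x - P x) = 0 := by
      rw [map_sub, ← ContinuousLinearMap.mul_apply, hPidem, sub_self]
    calc T₂ x = T₂ (P x) + T₂ (x - P x) := by rw [← map_add, ← h1]
    _ = P x + 0 := by rw [(hfix x).2, (hker _ hk).2]
    _ = P x := by rw [add_zero]
  rw [← hT₁A, hT₁P]

end AndoLattice

namespace AndoLattice
open ContinuousLinearMap
variable {H : Type*} [NormedAddCommGroup H] [InnerProductSpace ℂ H] [CompleteSpace H]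

lemma proj_le_of_comp {P Q : H →L[ℂ] H} (hPsa : IsSelfAdjoint P) (hPidem : P * P = P)
    (hQsa : IsSelfAdjoint Q) (hQidem : Q * Q = Q) (h : Q * P = P) : P ≤ Q := by
  have hPQ : P * Q = P := by
    have := congrArg star h
    rwa [star_mul, hPsa.star_eq, hQsa.star_eq] at this
  have hsq : (Q - P) * (Q - P) = Q - P := by
    have h2 : (Q - P) * (Q - P) = Q * Q - Q * P - P * Q + P * P := by noncomm_ring
    rw [h2, hQidem, h, hPQ, hPidem]
    abel
  exact sub_nonneg.mp (proj_nonneg (hQsa.sub hPsa) hsq)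

lemma comp_of_proj_le {P Q : H →L[ℂ] H} (hPidem : P * P = P)
    (hQsa : IsSelfAdjoint Q) (hQidem : Q * Q = Q) (h : P ≤ Q) : Q * P = P := by
  ext x
  show Q (P x) = P x
  set y := P x with hy
  have h1 : RCLike.re (inner ℂ (P y) y : ℂ) = ‖y‖ ^ 2 := by
    have : P y = y := by rw [hy, ← ContinuousLinearMap.mul_apply, hPidem]
    rw [this, inner_self_eq_norm_sq (𝕜 := ℂ)]
  have h2 : RCLike.re (inner ℂ (Q y) y : ℂ) = ‖Q y‖ ^ 2 := by
    have hQQ : Q (Q y) = Q y := by rw [← ContinuousLinearMap.mul_apply, hQidem]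
    rw [← inner_self_eq_norm_sq (𝕜 := ℂ) (Q y), ← hQQ]
    rw [symm_of_sa hQsa (Q y) y]
    rw [hQQ]
  have h3 := quad_nonneg (sub_nonneg.mpr h) y
  have h4 : (inner ℂ ((Q - P) y) y : ℂ) = inner ℂ (Q y) y - inner ℂ (P y) y := by
    rw [ContinuousLinearMap.sub_apply, inner_sub_left]
  rw [h4, map_sub, h1, h2] at h3
  have h5 : ‖y - Q y‖ ^ 2 = ‖y‖ ^ 2 - 2 * RCLike.re (inner ℂ y (Q y) : ℂ) + ‖Q y‖ ^ 2 :=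
    norm_sub_sq (𝕜 := ℂ) y (Q y)
  have h6 : RCLike.re (inner ℂ y (Q y) : ℂ) = ‖Q y‖ ^ 2 := by
    rw [← inner_conj_symm]
    rw [RCLike.conj_re]
    exact h2
  rw [h6] at h5
  have h7 : ‖y - Q y‖ ^ 2 ≤ 0 := by nlinarith
  have h8 : y - Q y = 0 := by
    have := le_antisymm h7 (by positivity)
    have h9 : ‖y - Q y‖ = 0 := by nlinarith [norm_nonneg (y - Q y)]
    rwa [norm_eq_zero] at h9
  have := sub_eq_zero.mp h8
  exact this.symm

lemma mem_range_iff_fixed {R : H →L[ℂ] H} (hR : R * R = R) {x : H} :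
    x ∈ LinearMap.range (R : H →ₗ[ℂ] H) ↔ R x = x := by
  constructor
  · rintro ⟨y, rfl⟩
    rw [ContinuousLinearMap.coe_coe, ← ContinuousLinearMap.mul_apply, hR]
  · intro h
    exact ⟨x, h⟩

lemma isClosed_range_of_idem {R : H →L[ℂ] H} (hR : R * R = R) :
    IsClosed ((LinearMap.range (R : H →ₗ[ℂ] H) : Submodule ℂ H) : Set H) := by
  have hset : ((LinearMap.range (R : H →ₗ[ℂ] H) : Submodule ℂ H) : Set H) = {x | R x = x} := by
    ext x
    exact mem_range_iff_fixed hR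
  rw [hset]
  exact isClosed_eq R.continuous continuous_id

noncomputable def projOp (V : Submodule ℂ H) [CompleteSpace V] : H →L[ℂ] H :=
  V.subtypeL ∘L Submodule.orthogonalProjection V

lemma projOp_of_mem (V : Submodule ℂ H) [CompleteSpace V] {u : H} (hu : u ∈ V) :
    projOp V u = u := by
  show ((Submodule.orthogonalProjection V u : V) : H) = u
  rw [show u = ((⟨u, hu⟩ : V) : H) from rfl, Submodule.orthogonalProjection_mem_subspace_eq_self]

lemma projOp_mem (V : Submodule ℂ H) [CompleteSpace V] (x : H) : projOp V x ∈ V :=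
  (Submodule.orthogonalProjection V x).2

lemma projOp_sa (V : Submodule ℂ H) [CompleteSpace V] : IsSelfAdjoint (projOp V) :=
  isSelfAdjoint_starProjection V

lemma projOp_idem (V : Submodule ℂ H) [CompleteSpace V] : projOp V * projOp V = projOp V := by
  ext x
  exact projOp_of_mem V (projOp_mem V x)

variable (r : H →L[ℂ] H)

lemma supp_of_range_le {R : H →L[ℂ] H} (hRsa : IsSelfAdjoint R)
    (h : ∀ x, R x ∈ Ksub r) : pK r * R * pK r = R := by
  have h1 : pK r * R = R := by
    ext x
    exact pK_of_mem r (h x)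
  have h2 : R * pK r = R := by
    have := congrArg star h1
    rwa [star_mul, (pK_sa r).star_eq, hRsa.star_eq] at this
  rw [h1, h2]

lemma range_le_K {R : H →L[ℂ] H} (hsupp : pK r * R * pK r = R) (x : H) : R x ∈ Ksub r := by
  have h1 : R x = pK r ((R * pK r) x) := by
    conv_lhs => rw [← hsupp]
    rfl
  rw [h1]
  exact pK_mem r _

end AndoLattice

open AndoLattice in
theorem extreme_points_lattice
    {H : Type*} [NormedAddCommGroup H] [InnerProductSpace ℂ H] [CompleteSpace H]
    (B : H →L[ℂ] H) (hB : IsPosOp B) (C D : H →L[ℂ] H)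
    (hC : C ∈ Set.extremePoints ℝ {A : H →L[ℂ] H | IsPosOp A ∧ OpLe A B})
    (hD : D ∈ Set.extremePoints ℝ {A : H →L[ℂ] H | IsPosOp A ∧ OpLe A B}) :
    (∃ M ∈ Set.extremePoints ℝ {A : H →L[ℂ] H | IsPosOp A ∧ OpLe A B},
      OpLe M C ∧ OpLe M D ∧
        ∀ G ∈ Set.extremePoints ℝ {A : H →L[ℂ] H | IsPosOp A ∧ OpLe A B},
          OpLe G C → OpLe G D → OpLe G M) ∧
    (∃ N ∈ Set.extremePoints ℝ {A : H →L[ℂ] H | IsPosOp A ∧ OpLe A B},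
      OpLe C N ∧ OpLe D N ∧
        ∀ G ∈ Set.extremePoints ℝ {A : H →L[ℂ] H | IsPosOp A ∧ OpLe A B},
          OpLe C G → OpLe D G → OpLe N G) := by
  have hB0 : 0 ≤ B := (isPosOp_iff_nonneg B).mp hB
  set r := CFC.sqrt B with hrdef
  have hr : IsSelfAdjoint r := IsSelfAdjoint.of_nonneg (CFC.sqrt_nonneg _)
  obtain ⟨P, hPsa, hPidem, hPsupp, hPC⟩ := extreme_rep hB0 hC
  obtain ⟨Q, hQsa, hQidem, hQsupp, hQD⟩ := extreme_rep hB0 hD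
  rw [← hrdef] at hPsupp hPC hQsupp hQD
  have hrangeP_K : LinearMap.range (P : H →ₗ[ℂ] H) ≤ Ksub r := by
    rintro x ⟨y, rfl⟩
    exact range_le_K r hPsupp y
  have hrangeQ_K : LinearMap.range (Q : H →ₗ[ℂ] H) ≤ Ksub r := by
    rintro x ⟨y, rfl⟩
    exact range_le_K r hQsupp y
  constructor
  · -- MEET
    set V : Submodule ℂ H := LinearMap.range (P : H →ₗ[ℂ] H) ⊓ LinearMap.range (Q : H →ₗ[ℂ] H) with hVdef
    have hVclosed : IsClosed (V : Set H) :=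
      (isClosed_range_of_idem hPidem).inter (isClosed_range_of_idem hQidem)
    haveI : CompleteSpace V := hVclosed.completeSpace_coe
    set pV := projOp V with hpVdef
    have hpVsa := projOp_sa V
    have hpVidem := projOp_idem V
    have hpVsupp : pK r * pV * pK r = pV :=
      supp_of_range_le r hpVsa fun x => hrangeP_K (projOp_mem V x).1
    have hPpV : P * pV = pV := by
      ext x
      exact (mem_range_iff_fixed hPidem).mp (projOp_mem V x).1
    have hQpV : Q * pV = pV := by
      ext x
      exact (mem_range_iff_fixed hQidem).mp (projOp_mem V x).2
    have hpV_le_P : pV ≤ P := proj_le_of_comp hpVsa hpVidem hPsa hPidem hPpV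
    have hpV_le_Q : pV ≤ Q := proj_le_of_comp hpVsa hpVidem hQsa hQidem hQpV
    refine ⟨r * pV * r, ?_, ?_, ?_, ?_⟩
    · have := rep_extreme hB0 hpVsa hpVidem (by rw [← hrdef]; exact hpVsupp)
      rwa [← hrdef] at this
    · rw [opLe_iff_le, ← hPC]
      exact conj_le_conj r hr hpV_le_P
    · rw [opLe_iff_le, ← hQD]
      exact conj_le_conj r hr hpV_le_Q
    · intro G hG hGC hGD
      obtain ⟨R, hRsa, hRidem, hRsupp, hRG⟩ := extreme_rep hB0 hG
      rw [← hrdef] at hRsupp hRG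
      have h1 : R ≤ P := le_of_conj_le r hr hRsa hPsa hRsupp hPsupp
        (by rw [hRG, hPC]; exact (opLe_iff_le G C).mp hGC)
      have h2 : R ≤ Q := le_of_conj_le r hr hRsa hQsa hRsupp hQsupp
        (by rw [hRG, hQD]; exact (opLe_iff_le G D).mp hGD)
      have hPR : P * R = R := comp_of_proj_le hRidem hPsa hPidem h1
      have hQR : Q * R = R := comp_of_proj_le hRidem hQsa hQidem h2
      have hRV : ∀ x, R x ∈ V := by
        intro x
        refine ⟨(mem_range_iff_fixed hPidem).mpr ?_, (mem_range_iff_fixed hQidem).mpr ?_⟩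
        · rw [← ContinuousLinearMap.mul_apply, hPR]
        · rw [← ContinuousLinearMap.mul_apply, hQR]
      have hpVR : pV * R = R := by
        ext x
        exact projOp_of_mem V (hRV x)
      have hR_le_pV : R ≤ pV := proj_le_of_comp hRsa hRidem hpVsa hpVidem hpVR
      rw [opLe_iff_le, ← hRG]
      exact conj_le_conj r hr hR_le_pV
  · -- JOIN
    set W : Submodule ℂ H := (LinearMap.range (P : H →ₗ[ℂ] H) ⊔ LinearMap.range (Q : H →ₗ[ℂ] H)).topologicalClosure
      with hWdef
    haveI : CompleteSpace W := (Submodule.isClosed_topologicalClosure _).completeSpace_coe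
    set pW := projOp W with hpWdef
    have hpWsa := projOp_sa W
    have hpWidem := projOp_idem W
    have hW_le_K : W ≤ Ksub r :=
      Submodule.topologicalClosure_minimal _ (sup_le hrangeP_K hrangeQ_K)
        (Submodule.isClosed_topologicalClosure _)
    have hpWsupp : pK r * pW * pK r = pW :=
      supp_of_range_le r hpWsa fun x => hW_le_K (projOp_mem W x)
    have hpWP : pW * P = P := by
      ext x
      exact projOp_of_mem W
        (Submodule.le_topologicalClosure _ (Submodule.mem_sup_left ⟨x, rfl⟩))
    have hpWQ : pW * Q = Q := by
      ext x
      exact projOp_of_mem W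
        (Submodule.le_topologicalClosure _ (Submodule.mem_sup_right ⟨x, rfl⟩))
    have hP_le_pW : P ≤ pW := proj_le_of_comp hPsa hPidem hpWsa hpWidem hpWP
    have hQ_le_pW : Q ≤ pW := proj_le_of_comp hQsa hQidem hpWsa hpWidem hpWQ
    refine ⟨r * pW * r, ?_, ?_, ?_, ?_⟩
    · have := rep_extreme hB0 hpWsa hpWidem (by rw [← hrdef]; exact hpWsupp)
      rwa [← hrdef] at this
    · rw [opLe_iff_le, ← hPC]
      exact conj_le_conj r hr hP_le_pW
    · rw [opLe_iff_le, ← hQD]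
      exact conj_le_conj r hr hQ_le_pW
    · intro G hG hCG hDG
      obtain ⟨R, hRsa, hRidem, hRsupp, hRG⟩ := extreme_rep hB0 hG
      rw [← hrdef] at hRsupp hRG
      have h1 : P ≤ R := le_of_conj_le r hr hPsa hRsa hPsupp hRsupp
        (by rw [hRG, hPC]; exact (opLe_iff_le C G).mp hCG)
      have h2 : Q ≤ R := le_of_conj_le r hr hQsa hRsa hQsupp hRsupp
        (by rw [hRG, hQD]; exact (opLe_iff_le D G).mp hDG)
      have hRP : R * P = P := comp_of_proj_le hPidem hRsa hRidem h1
      have hRQ : R * Q = Q := comp_of_proj_le hQidem hRsa hRidem h2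
      have hrange1 : LinearMap.range (P : H →ₗ[ℂ] H) ≤ LinearMap.range (R : H →ₗ[ℂ] H) := by
        rintro x ⟨y, rfl⟩
        refine (mem_range_iff_fixed hRidem).mpr ?_
        rw [ContinuousLinearMap.coe_coe, ← ContinuousLinearMap.mul_apply, hRP]
      have hrange2 : LinearMap.range (Q : H →ₗ[ℂ] H) ≤ LinearMap.range (R : H →ₗ[ℂ] H) := by
        rintro x ⟨y, rfl⟩
        refine (mem_range_iff_fixed hRidem).mpr ?_
        rw [ContinuousLinearMap.coe_coe, ← ContinuousLinearMap.mul_apply, hRQ]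
      have hW_le_R : W ≤ LinearMap.range (R : H →ₗ[ℂ] H) :=
        Submodule.topologicalClosure_minimal _ (sup_le hrange1 hrange2)
          (isClosed_range_of_idem hRidem)
      have hRpW : R * pW = pW := by
        ext x
        exact (mem_range_iff_fixed hRidem).mp (hW_le_R (projOp_mem W x))
      have hpW_le_R : pW ≤ R := proj_le_of_comp hpWsa hpWidem hRsa hRidem hRpW
      rw [opLe_iff_le, ← hRG]
      exact conj_le_conj r hr hpW_le_R
end

section
/- Let t be a nonnegative form on a complex vector space X. Then there exist a complex Hilbert space K and a map Φ from the set [0,t] of nonnegative forms w on X with w ≤ t to the set of positive contractions on K (continuous linear A : K → K with 0 ≤ A ≤ I in the Loewner order) such that Φ is a bijection between these two sets and, for all w, w' ∈ [0,t], w ≤ w' if and only if Φ(w) ≤ Φ(w'). -/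
open scoped ComplexOrder

/-- A sesquilinear form (linear in the first, conjugate-linear in the second variable)
`t : X →ₗ[ℂ] X →ₗ⋆[ℂ] ℂ` is nonnegative if `t(x,x) ≥ 0` for all `x`. -/
def IsNNForm {X : Type*} [AddCommGroup X] [Module ℂ X]
    (t : X →ₗ[ℂ] X →ₗ⋆[ℂ] ℂ) : Prop :=
  ∀ x : X, 0 ≤ t x x

/-- The quadratic form of a form: `t[x] = t(x,x)`, viewed as a real number. -/
def FQ {X : Type*} [AddCommGroup X] [Module ℂ X]
    (t : X →ₗ[ℂ] X →ₗ⋆[ℂ] ℂ) (x : X) : ℝ :=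
  (t x x).re

/-- The order on forms: `t ≤ w` iff `t[x] ≤ w[x]` for all `x`. -/
def FLe {X : Type*} [AddCommGroup X] [Module ℂ X]
    (t w : X →ₗ[ℂ] X →ₗ⋆[ℂ] ℂ) : Prop :=
  ∀ x : X, FQ t x ≤ FQ w x

/-- `t` and `w` are singular: the only nonnegative form below both is the zero form. -/
def SingForm {X : Type*} [AddCommGroup X] [Module ℂ X]
    (t w : X →ₗ[ℂ] X →ₗ⋆[ℂ] ℂ) : Prop :=
  ∀ s : X →ₗ[ℂ] X →ₗ⋆[ℂ] ℂ, IsNNForm s → FLe s t → FLe s w → s = 0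

universe u

set_option synthInstance.maxHeartbeats 1000000
set_option maxHeartbeats 2000000

namespace GNS

variable {X : Type u} [AddCommGroup X] [Module ℂ X]

open Complex

lemma im_diag (s : X →ₗ[ℂ] X →ₗ⋆[ℂ] ℂ) (hs : IsNNForm s) (x : X) : (s x x).im = 0 := by
  have := (Complex.le_def.mp (hs x)).2
  simpa using this.symm

lemma re_diag_nonneg (s : X →ₗ[ℂ] X →ₗ⋆[ℂ] ℂ) (hs : IsNNForm s) (x : X) : 0 ≤ (s x x).re := by
  have := (Complex.le_def.mp (hs x)).1
  simpa using this

lemma nn_of (z : ℂ) (h1 : z.im = 0) (h2 : 0 ≤ z.re) : 0 ≤ z := by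
  rw [Complex.le_def]; simp [h1, h2]

lemma herm (s : X →ₗ[ℂ] X →ₗ⋆[ℂ] ℂ) (hs : IsNNForm s) (x y : X) :
    s y x = (starRingEnd ℂ) (s x y) := by
  have e1 : s (x + y) (x + y) = s x x + s x y + s y x + s y y := by
    simp [map_add, LinearMap.add_apply]; ring
  have e2 : s (x + Complex.I • y) (x + Complex.I • y)
      = s x x + (-Complex.I) * s x y + Complex.I * s y x + s y y := by
    simp [map_add, map_smul, LinearMap.add_apply, LinearMap.smul_apply, map_smulₛₗ,
      smul_eq_mul, Complex.conj_I]
    linear_combination (-((s y) y) : ℂ) * Complex.I_sq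
  have i1 := im_diag s hs (x + y)
  have i2 := im_diag s hs (x + Complex.I • y)
  rw [e1] at i1
  rw [e2] at i2
  simp [Complex.add_im, Complex.mul_im, im_diag s hs x, im_diag s hs y] at i1 i2
  apply Complex.ext <;> simp [Complex.conj_re, Complex.conj_im] <;> linarith

lemma cs (s : X →ₗ[ℂ] X →ₗ⋆[ℂ] ℂ) (hs : IsNNForm s) (x y : X) :
    ‖s x y‖ ^ 2 ≤ (s x x).re * (s y y).re := by
  letI c : PreInnerProductSpace.Core ℂ X :=
    { inner := fun a b => s b a
      conj_inner_symm := fun a b => show (starRingEnd ℂ) (s a b) = s b a from (herm s hs a b).symm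
      re_inner_nonneg := fun a => re_diag_nonneg s hs a
      add_left := fun a b z => by simp [map_add]
      smul_left := fun a b r => by simp [map_smulₛₗ, smul_eq_mul] }
  have h := @InnerProductSpace.Core.inner_mul_inner_self_le ℂ X _ _ _ c x y
  have hx : (@inner ℂ X c.toInner x y) = s y x := rfl
  have hy : (@inner ℂ X c.toInner y x) = s x y := rfl
  have hxx : (@inner ℂ X c.toInner x x) = s x x := rfl
  have hyy : (@inner ℂ X c.toInner y y) = s y y := rfl
  rw [hx, hy, hxx, hyy, herm s hs x y] at h
  simpa [Complex.norm_conj, RCLike.norm_conj, sq] using h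

end GNS

namespace GNS2

variable {X : Type u} [AddCommGroup X] [Module ℂ X]

open GNS

lemma vanish (s : X →ₗ[ℂ] X →ₗ⋆[ℂ] ℂ) (hs : IsNNForm s) {x : X} (hx : (s x x).re = 0) (y : X) :
    s x y = 0 ∧ s y x = 0 := by
  have h2 : s y x = 0 := by
    have := cs s hs y x
    rw [hx] at this
    have : ‖s y x‖ ^ 2 ≤ 0 := by simpa using this
    have : ‖s y x‖ = 0 := by nlinarith [norm_nonneg (s y x), sq_nonneg ‖s y x‖]
    simpa using this
  have h1 : s x y = 0 := by
    have := cs s hs x y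
    rw [hx] at this
    have : ‖s x y‖ ^ 2 ≤ 0 := by simpa using this
    have : ‖s x y‖ = 0 := by nlinarith [norm_nonneg (s x y), sq_nonneg ‖s x y‖]
    simpa using this
  exact ⟨h1, h2⟩

variable (t : X →ₗ[ℂ] X →ₗ⋆[ℂ] ℂ) (ht : IsNNForm t)

def NS : Submodule ℂ X where
  carrier := {x | t x x = 0}
  zero_mem' := by simp
  add_mem' := by
    intro a b ha hb
    have ha' : (t a a).re = 0 := by simp [Set.mem_setOf_eq.mp ha]
    have hb' : (t b b).re = 0 := by simp [Set.mem_setOf_eq.mp hb]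
    have e1 : t (a + b) (a + b) = t a a + t a b + t b a + t b b := by
      simp [map_add, LinearMap.add_apply]; ring
    simp only [Set.mem_setOf_eq] at *
    rw [e1, ha, hb, (vanish t ht ha' b).1, (vanish t ht hb' a).1]
    simp
  smul_mem' := by
    intro c x hx
    simp only [Set.mem_setOf_eq] at *
    simp [map_smul, LinearMap.smul_apply, map_smulₛₗ, smul_eq_mul, hx]

lemma mem_NS {x : X} : x ∈ NS t ht ↔ t x x = 0 := Iff.rfl

-- every nonnegative form below t vanishes on NS
lemma null_diag (s : X →ₗ[ℂ] X →ₗ⋆[ℂ] ℂ) (hs : IsNNForm s) (hle : FLe s t)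
    {x : X} (hx : x ∈ NS t ht) : (s x x).re = 0 := by
  have h1 : (t x x).re = 0 := by rw [(mem_NS t ht).mp hx]; simp
  have := hle x
  unfold FQ at this
  have h2 := re_diag_nonneg s hs x
  linarith

abbrev Q := X ⧸ NS t ht

def liftForm (s : X →ₗ[ℂ] X →ₗ⋆[ℂ] ℂ) (hs : IsNNForm s) (hle : FLe s t) :
    Q t ht →ₗ[ℂ] Q t ht →ₗ⋆[ℂ] ℂ :=
  Submodule.liftQ _
    { toFun := fun x => Submodule.liftQ _ (s x)
        (fun y hy => (vanish s hs (null_diag t ht s hs hle hy) x).2)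
      map_add' := fun a b => by
        apply LinearMap.ext
        intro q
        obtain ⟨y, rfl⟩ := Submodule.Quotient.mk_surjective _ q
        simp [Submodule.liftQ_apply, map_add, LinearMap.add_apply]
        rfl
      map_smul' := fun c a => by
        apply LinearMap.ext
        intro q
        obtain ⟨y, rfl⟩ := Submodule.Quotient.mk_surjective _ q
        simp [Submodule.liftQ_apply, map_smul, LinearMap.smul_apply]
        exact Or.inl rfl }
    (by
      intro x hx
      apply LinearMap.ext
      intro q
      obtain ⟨y, rfl⟩ := Submodule.Quotient.mk_surjective _ q
      simp only [LinearMap.coe_mk, AddHom.coe_mk, Submodule.liftQ_apply, LinearMap.zero_apply]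
      exact (vanish s hs (null_diag t ht s hs hle hx) y).1)

@[simp] lemma liftForm_mk (s : X →ₗ[ℂ] X →ₗ⋆[ℂ] ℂ) (hs : IsNNForm s) (hle : FLe s t)
    (x y : X) :
    liftForm t ht s hs hle (Submodule.Quotient.mk x) (Submodule.Quotient.mk y) = s x y := by
  simp [liftForm, Submodule.liftQ_apply]
  rfl

end GNS2

namespace GNS3

variable {X : Type u} [AddCommGroup X] [Module ℂ X]
open GNS GNS2 UniformSpace

variable (t : X →ₗ[ℂ] X →ₗ⋆[ℂ] ℂ) (ht : IsNNForm t)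

noncomputable def tQ : Q t ht →ₗ[ℂ] Q t ht →ₗ⋆[ℂ] ℂ :=
  liftForm t ht t ht (fun _ => le_rfl : FLe t t)

noncomputable def core : InnerProductSpace.Core ℂ (Q t ht) where
  inner a b := tQ t ht b a
  conj_inner_symm a b := by
    obtain ⟨x, rfl⟩ := Submodule.Quotient.mk_surjective _ a
    obtain ⟨y, rfl⟩ := Submodule.Quotient.mk_surjective _ b
    show (starRingEnd ℂ) (tQ t ht (Submodule.Quotient.mk x) (Submodule.Quotient.mk y))
        = tQ t ht (Submodule.Quotient.mk y) (Submodule.Quotient.mk x)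
    simp only [tQ, liftForm_mk]
    exact (herm t ht x y).symm
  re_inner_nonneg a := by
    obtain ⟨x, rfl⟩ := Submodule.Quotient.mk_surjective _ a
    show 0 ≤ RCLike.re (tQ t ht (Submodule.Quotient.mk x) (Submodule.Quotient.mk x))
    simp only [tQ, liftForm_mk]
    exact re_diag_nonneg t ht x
  add_left a b z := by
    show tQ t ht z (a + b) = tQ t ht z a + tQ t ht z b
    simp [map_add]
  smul_left a b r := by
    show tQ t ht b (r • a) = (starRingEnd ℂ) r * tQ t ht b a
    simp [map_smulₛₗ, smul_eq_mul]
  definite a h := by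
    obtain ⟨x, rfl⟩ := Submodule.Quotient.mk_surjective _ a
    have h' : tQ t ht (Submodule.Quotient.mk x) (Submodule.Quotient.mk x) = 0 := h
    replace h' : t x x = 0 := h'
    exact (Submodule.Quotient.mk_eq_zero _).mpr ((mem_NS t ht).mpr h')

noncomputable instance : NormedAddCommGroup (Q t ht) :=
  @InnerProductSpace.Core.toNormedAddCommGroup ℂ (Q t ht) _ _ _ (core t ht)

noncomputable instance : InnerProductSpace ℂ (Q t ht) :=
  InnerProductSpace.ofCore (core t ht).toCore

lemma inner_mk (x y : X) :
    (inner ℂ (Submodule.Quotient.mk x : Q t ht) (Submodule.Quotient.mk y) : ℂ) = t y x := by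
  show tQ t ht (Submodule.Quotient.mk y) (Submodule.Quotient.mk x) = t y x
  exact liftForm_mk t ht t ht _ y x

lemma norm_mk_sq (x : X) : ‖(Submodule.Quotient.mk x : Q t ht)‖ ^ 2 = (t x x).re := by
  rw [← @inner_self_eq_norm_sq ℂ, inner_mk]
  simp

abbrev K := Completion (Q t ht)

noncomputable def ι (x : X) : K t ht := ((Submodule.Quotient.mk x : Q t ht) : K t ht)

lemma inner_ι (x y : X) : (inner ℂ (ι t ht x) (ι t ht y) : ℂ) = t y x := by
  rw [ι, ι, Completion.inner_coe, inner_mk]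

end GNS3

namespace GNS4

variable {X : Type u} [AddCommGroup X] [Module ℂ X]
open GNS GNS2 GNS3 UniformSpace

variable (t : X →ₗ[ℂ] X →ₗ⋆[ℂ] ℂ) (ht : IsNNForm t)

lemma hd : DenseRange (⇑(Completion.toComplL : Q t ht →L[ℂ] K t ht)) := by
  rw [Completion.coe_toComplL]
  exact Completion.denseRange_coe

lemma hui : IsUniformInducing (⇑(Completion.toComplL : Q t ht →L[ℂ] K t ht)) := by
  rw [Completion.coe_toComplL]
  exact Completion.isUniformInducing_coe _

variable (w : X →ₗ[ℂ] X →ₗ⋆[ℂ] ℂ) (hw : IsNNForm w) (hle : FLe w t)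

lemma wQ_bound (a b : Q t ht) : ‖liftForm t ht w hw hle a b‖ ≤ ‖a‖ * ‖b‖ := by
  obtain ⟨x, rfl⟩ := Submodule.Quotient.mk_surjective _ a
  obtain ⟨y, rfl⟩ := Submodule.Quotient.mk_surjective _ b
  rw [liftForm_mk]
  have h2 : ‖w x y‖ ^ 2 ≤ (‖(Submodule.Quotient.mk x : Q t ht)‖ * ‖(Submodule.Quotient.mk y : Q t ht)‖) ^ 2 := by
    rw [mul_pow, norm_mk_sq, norm_mk_sq]
    calc ‖w x y‖ ^ 2 ≤ (w x x).re * (w y y).re := cs w hw x y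
    _ ≤ (t x x).re * (t y y).re := by
        have h1 := hle x; have h2 := hle y
        unfold FQ at h1 h2
        have := re_diag_nonneg w hw x; have := re_diag_nonneg w hw y
        have := re_diag_nonneg t ht x; have := re_diag_nonneg t ht y
        nlinarith
  have := Real.sqrt_le_sqrt h2
  rwa [Real.sqrt_sq (norm_nonneg _), Real.sqrt_sq (by positivity)] at this

noncomputable def φ (a : Q t ht) : Q t ht →L[ℂ] ℂ :=
  LinearMap.mkContinuous ((liftForm t ht w hw hle).flip a) ‖a‖
    (fun b => by rw [LinearMap.flip_apply]
                 calc ‖liftForm t ht w hw hle b a‖ ≤ ‖b‖ * ‖a‖ := wQ_bound t ht w hw hle b a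
                 _ = ‖a‖ * ‖b‖ := mul_comm _ _)

@[simp] lemma φ_apply (a b : Q t ht) : φ t ht w hw hle a b = liftForm t ht w hw hle b a := rfl

noncomputable def ψ (a : Q t ht) : K t ht →L[ℂ] ℂ :=
  (φ t ht w hw hle a).extend Completion.toComplL

@[simp] lemma ψ_coe (a b : Q t ht) : ψ t ht w hw hle a (↑b) = liftForm t ht w hw hle b a := by
  have : ψ t ht w hw hle a (Completion.toComplL b) = φ t ht w hw hle a b :=
    ContinuousLinearMap.extend_eq _ (hd t ht) (hui t ht) _
  simpa using this

lemma ψ_norm (a : Q t ht) : ‖ψ t ht w hw hle a‖ ≤ ‖a‖ := by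
  apply ContinuousLinearMap.opNorm_le_bound _ (norm_nonneg a)
  intro ξ
  refine Completion.induction_on ξ ?_ ?_
  · exact isClosed_le (continuous_norm.comp (ψ t ht w hw hle a).continuous)
      (continuous_const.mul continuous_norm)
  · intro b
    rw [ψ_coe]
    calc ‖liftForm t ht w hw hle b a‖ ≤ ‖b‖ * ‖a‖ := wQ_bound t ht w hw hle b a
    _ = ‖a‖ * ‖(b : K t ht)‖ := by rw [Completion.norm_coe]; exact mul_comm _ _

lemma ψ_add (a a' : Q t ht) :
    ψ t ht w hw hle (a + a') = ψ t ht w hw hle a + ψ t ht w hw hle a' := by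
  refine (ContinuousLinearMap.extend_unique _ (hd t ht) (hui t ht) _ ?_).trans rfl
  ext b
  simp [map_add]

lemma ψ_smul (c : ℂ) (a : Q t ht) :
    ψ t ht w hw hle (c • a) = (starRingEnd ℂ) c • ψ t ht w hw hle a := by
  refine (ContinuousLinearMap.extend_unique _ (hd t ht) (hui t ht) _ ?_).trans rfl
  ext b
  simp [map_smulₛₗ, smul_eq_mul]

noncomputable def A₀fun (a : Q t ht) : K t ht :=
  (InnerProductSpace.toDual ℂ (K t ht)).symm (ψ t ht w hw hle a)

lemma inner_A₀fun (a : Q t ht) (ξ : K t ht) :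
    (inner ℂ (A₀fun t ht w hw hle a) ξ : ℂ) = ψ t ht w hw hle a ξ :=
  InnerProductSpace.toDual_symm_apply

noncomputable def A₀ : Q t ht →L[ℂ] K t ht :=
  LinearMap.mkContinuous
    { toFun := A₀fun t ht w hw hle
      map_add' := fun a a' => by
        simp only [A₀fun]
        rw [ψ_add, map_add]
      map_smul' := fun c a => by
        simp only [A₀fun]
        rw [ψ_smul, LinearIsometryEquiv.map_smulₛₗ]
        simp }
    1
    (fun a => by
      have : ‖A₀fun t ht w hw hle a‖ = ‖ψ t ht w hw hle a‖ :=
        LinearIsometryEquiv.norm_map _ _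
      rw [one_mul]
      exact this ▸ ψ_norm t ht w hw hle a)

noncomputable def Aop : K t ht →L[ℂ] K t ht :=
  (A₀ t ht w hw hle).extend Completion.toComplL

lemma Aop_key (x y : X) :
    (inner ℂ (Aop t ht w hw hle (ι t ht x)) (ι t ht y) : ℂ) = w y x := by
  have h1 : Aop t ht w hw hle (ι t ht x) = A₀fun t ht w hw hle (Submodule.Quotient.mk x) := by
    have : Aop t ht w hw hle (Completion.toComplL (Submodule.Quotient.mk x))
        = A₀ t ht w hw hle (Submodule.Quotient.mk x) :=
      ContinuousLinearMap.extend_eq _ (hd t ht) (hui t ht) _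
    exact this
  rw [h1, inner_A₀fun, ι, ψ_coe, liftForm_mk]

end GNS4

namespace GNS5

variable {X : Type u} [AddCommGroup X] [Module ℂ X]
open GNS GNS2 GNS3 GNS4 UniformSpace

variable (t : X →ₗ[ℂ] X →ₗ⋆[ℂ] ℂ) (ht : IsNNForm t)

lemma dense_ind (P : K t ht → Prop) (hP : IsClosed {ξ | P ξ}) (h : ∀ x : X, P (ι t ht x)) :
    ∀ ξ, P ξ := by
  intro ξ
  refine Completion.induction_on ξ hP ?_
  intro q
  obtain ⟨x, rfl⟩ := Submodule.Quotient.mk_surjective _ q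
  exact h x

lemma posOp_of (B : K t ht →L[ℂ] K t ht)
    (h : ∀ x : X, 0 ≤ (inner ℂ (B (ι t ht x)) (ι t ht x) : ℂ)) : IsPosOp B := by
  have hc : Continuous fun ξ : K t ht => (inner ℂ (B ξ) ξ : ℂ) :=
    Continuous.inner B.continuous continuous_id
  refine dense_ind t ht (fun ξ => 0 ≤ (inner ℂ (B ξ) ξ : ℂ)) ?_ h
  have hset : {ξ : K t ht | 0 ≤ (inner ℂ (B ξ) ξ : ℂ)}
      = {ξ | 0 ≤ (inner ℂ (B ξ) ξ : ℂ).re} ∩ {ξ | (inner ℂ (B ξ) ξ : ℂ).im = 0} := by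
    ext ξ
    simp only [Set.mem_setOf_eq, Set.mem_inter_iff, Complex.le_def]
    constructor
    · rintro ⟨h1, h2⟩; exact ⟨by simpa using h1, by simpa using h2.symm⟩
    · rintro ⟨h1, h2⟩; exact ⟨by simpa using h1, by simp [h2]⟩
  rw [hset]
  exact IsClosed.inter
    (isClosed_le continuous_const (Complex.continuous_re.comp hc))
    (isClosed_eq (Complex.continuous_im.comp hc) continuous_const)

lemma op_ext (B C : K t ht →L[ℂ] K t ht)
    (h : ∀ x y : X, (inner ℂ (B (ι t ht x)) (ι t ht y) : ℂ) = inner ℂ (C (ι t ht x)) (ι t ht y)) :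
    B = C := by
  have step1 : ∀ x : X, B (ι t ht x) = C (ι t ht x) := by
    intro x
    apply ext_inner_right ℂ
    apply dense_ind t ht (fun v => (inner ℂ (B (ι t ht x)) v : ℂ) = inner ℂ (C (ι t ht x)) v)
    · exact isClosed_eq (Continuous.inner continuous_const continuous_id)
        (Continuous.inner continuous_const continuous_id)
    · exact h x
  ext ξ
  refine dense_ind t ht (fun ξ => B ξ = C ξ) ?_ step1 ξ
  exact isClosed_eq B.continuous C.continuous

noncomputable def ιL : X →ₗ[ℂ] K t ht :=
  (Completion.toComplL : Q t ht →L[ℂ] K t ht).toLinearMap.comp (NS t ht).mkQ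

@[simp] lemma ιL_apply (x : X) : ιL t ht x = ι t ht x := rfl

noncomputable def wForm (A : K t ht →L[ℂ] K t ht) : X →ₗ[ℂ] X →ₗ⋆[ℂ] ℂ :=
  LinearMap.flip
    { toFun := fun y => ((innerSL ℂ (A (ιL t ht y))).toLinearMap).comp (ιL t ht)
      map_add' := fun y y' => by
        apply LinearMap.ext
        intro x
        simp [map_add, inner_add_left]
      map_smul' := fun c y => by
        apply LinearMap.ext
        intro x
        simp [map_smul, inner_smul_left] }

@[simp] lemma wForm_apply (A : K t ht →L[ℂ] K t ht) (x y : X) :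
    wForm t ht A x y = (inner ℂ (A (ι t ht y)) (ι t ht x) : ℂ) := rfl

end GNS5

theorem form_interval_order_isomorphic_to_operator_interval
    {X : Type u} [AddCommGroup X] [Module ℂ X]
    (t : X →ₗ[ℂ] X →ₗ⋆[ℂ] ℂ) (ht : IsNNForm t) :
    ∃ (K : Type u) (_ : NormedAddCommGroup K) (_ : InnerProductSpace ℂ K)
      (_ : CompleteSpace K) (Φ : (X →ₗ[ℂ] X →ₗ⋆[ℂ] ℂ) → (K →L[ℂ] K)),
      Set.BijOn Φ {w : X →ₗ[ℂ] X →ₗ⋆[ℂ] ℂ | IsNNForm w ∧ FLe w t}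
        {A : K →L[ℂ] K | IsPosOp A ∧ OpLe A 1} ∧
      ∀ w w' : X →ₗ[ℂ] X →ₗ⋆[ℂ] ℂ, (IsNNForm w ∧ FLe w t) → (IsNNForm w' ∧ FLe w' t) →
        (FLe w w' ↔ OpLe (Φ w) (Φ w')) := by
  classical
  open GNS GNS2 GNS3 GNS4 GNS5 in
  refine ⟨K t ht, inferInstance, inferInstance, inferInstance,
    fun w => if h : IsNNForm w ∧ FLe w t then Aop t ht w h.1 h.2 else 0, ?_⟩
  set Φ : (X →ₗ[ℂ] X →ₗ⋆[ℂ] ℂ) → (GNS3.K t ht →L[ℂ] GNS3.K t ht) :=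
    fun w => if h : IsNNForm w ∧ FLe w t then GNS4.Aop t ht w h.1 h.2 else 0 with hΦ
  have key : ∀ (w : X →ₗ[ℂ] X →ₗ⋆[ℂ] ℂ) (h : IsNNForm w ∧ FLe w t) (x y : X),
      (inner ℂ (Φ w (GNS3.ι t ht x)) (GNS3.ι t ht y) : ℂ) = w y x := by
    intro w h x y
    rw [hΦ]
    simp only [dif_pos h]
    exact GNS4.Aop_key t ht w h.1 h.2 x y
  have hmaps : ∀ w : X →ₗ[ℂ] X →ₗ⋆[ℂ] ℂ, (IsNNForm w ∧ FLe w t) →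
      IsPosOp (Φ w) ∧ OpLe (Φ w) 1 := by
    intro w hw
    constructor
    · apply GNS5.posOp_of t ht
      intro x
      rw [key w hw x x]
      exact hw.1 x
    · apply GNS5.posOp_of t ht
      intro x
      have e : (inner ℂ ((1 - Φ w) (GNS3.ι t ht x)) (GNS3.ι t ht x) : ℂ) = t x x - w x x := by
        rw [ContinuousLinearMap.sub_apply, inner_sub_left, key w hw x x,
          ContinuousLinearMap.one_apply, GNS3.inner_ι]
      rw [e]
      apply GNS.nn_of
      · simp [GNS.im_diag t ht x, GNS.im_diag w hw.1 x]
      · have := hw.2 x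
        unfold FQ at this
        simp only [Complex.sub_re]
        linarith
  have horder : ∀ w w' : X →ₗ[ℂ] X →ₗ⋆[ℂ] ℂ, (IsNNForm w ∧ FLe w t) → (IsNNForm w' ∧ FLe w' t) →
      (FLe w w' ↔ OpLe (Φ w) (Φ w')) := by
    intro w w' h h'
    constructor
    · intro hle
      apply GNS5.posOp_of t ht
      intro x
      have e : (inner ℂ ((Φ w' - Φ w) (GNS3.ι t ht x)) (GNS3.ι t ht x) : ℂ) = w' x x - w x x := by
        rw [ContinuousLinearMap.sub_apply, inner_sub_left, key w h x x, key w' h' x x]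
      rw [e]
      apply GNS.nn_of
      · simp [GNS.im_diag w h.1 x, GNS.im_diag w' h'.1 x]
      · have := hle x
        unfold FQ at this
        simp only [Complex.sub_re]
        linarith
    · intro hop x
      have e : (inner ℂ ((Φ w' - Φ w) (GNS3.ι t ht x)) (GNS3.ι t ht x) : ℂ) = w' x x - w x x := by
        rw [ContinuousLinearMap.sub_apply, inner_sub_left, key w h x x, key w' h' x x]
      have h0 := hop (GNS3.ι t ht x)
      rw [e] at h0
      have := (Complex.le_def.mp h0).1
      unfold FQ
      simp only [Complex.zero_re, Complex.sub_re] at this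
      linarith
  refine ⟨⟨?_, ?_, ?_⟩, horder⟩
  · intro w hw
    exact hmaps w hw
  · intro w hw w' hw' heq
    apply LinearMap.ext
    intro y
    apply LinearMap.ext
    intro x
    have := key w hw x y
    rw [heq, key w' hw' x y] at this
    exact this.symm
  · intro A hA
    obtain ⟨hA1, hA2⟩ := hA
    have hmem : IsNNForm (GNS5.wForm t ht A) ∧ FLe (GNS5.wForm t ht A) t := by
      constructor
      · intro x
        rw [GNS5.wForm_apply]
        exact hA1 (GNS3.ι t ht x)
      · intro x
        have h0 := hA2 (GNS3.ι t ht x)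
        have e : (inner ℂ ((1 - A) (GNS3.ι t ht x)) (GNS3.ι t ht x) : ℂ)
            = t x x - inner ℂ (A (GNS3.ι t ht x)) (GNS3.ι t ht x) := by
          rw [ContinuousLinearMap.sub_apply, inner_sub_left,
            ContinuousLinearMap.one_apply, GNS3.inner_ι]
        rw [e] at h0
        have := (Complex.le_def.mp h0).1
        unfold FQ
        rw [GNS5.wForm_apply]
        simp only [Complex.zero_re, Complex.sub_re] at this
        linarith
    refine ⟨GNS5.wForm t ht A, hmem, ?_⟩
    apply GNS5.op_ext t ht
    intro x y
    rw [key _ hmem x y, GNS5.wForm_apply]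
end

section
/- Let t be a nonnegative form on a complex vector space X and let w be a nonnegative form with w ≤ t; let t − w denote the form (x,y) ↦ t(x,y) − w(x,y), which is again a nonnegative form. Then w is an extreme point of the convex set [0,t] (inside the complex vector space of sesquilinear forms on X, regarded as a real vector space) if and only if w and t − w are singular. -/
open scoped ComplexOrder

section Aux

variable {X : Type*} [AddCommGroup X] [Module ℂ X]

lemma FQ_nonneg {p : X →ₗ[ℂ] X →ₗ⋆[ℂ] ℂ} (hp : IsNNForm p) (x : X) : 0 ≤ FQ p x :=
  (Complex.le_def.mp (hp x)).1

lemma im_eq_zero {p : X →ₗ[ℂ] X →ₗ⋆[ℂ] ℂ} (hp : IsNNForm p) (x : X) : (p x x).im = 0 :=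
  ((Complex.le_def.mp (hp x)).2).symm

/-- A nonnegative form is Hermitian. -/
lemma herm {p : X →ₗ[ℂ] X →ₗ⋆[ℂ] ℂ} (hp : IsNNForm p) (x y : X) :
    p y x = (starRingEnd ℂ) (p x y) := by
  have h1 : (p (x + y) (x + y)).im = 0 := im_eq_zero hp _
  have h2 : (p (x + Complex.I • y) (x + Complex.I • y)).im = 0 := im_eq_zero hp _
  have hx : (p x x).im = 0 := im_eq_zero hp x
  have hy : (p y y).im = 0 := im_eq_zero hp y
  simp only [map_add, LinearMap.map_smulₛₗ, LinearMap.add_apply, LinearMap.smul_apply,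
    LinearMap.map_smul, smul_eq_mul, Complex.add_im, Complex.mul_im] at h1 h2
  apply Complex.ext <;>
  · simp only [Complex.conj_re, Complex.conj_im]
    simp [Complex.ext_iff, Complex.conj_re, Complex.conj_im] at h1 h2 ⊢
    nlinarith [h1, h2, hx, hy]

/-- Polarization: zero quadratic form implies zero form. -/
lemma form_eq_zero {p : X →ₗ[ℂ] X →ₗ⋆[ℂ] ℂ} (h : ∀ x, p x x = 0) : p = 0 := by
  ext x y
  have h1 : p (x + y) (x + y) = 0 := h _
  have h2 : p (x + Complex.I • y) (x + Complex.I • y) = 0 := h _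
  simp only [map_add, LinearMap.map_smulₛₗ, LinearMap.add_apply, LinearMap.smul_apply,
    LinearMap.map_smul, smul_eq_mul, h, add_zero, zero_add] at h1 h2
  simp only [LinearMap.zero_apply, RingHom.id_apply, Complex.conj_I, mul_zero, add_zero,
    neg_mul] at h1 h2 ⊢
  have h3 : p y x = p x y := by
    apply mul_left_cancel₀ Complex.I_ne_zero
    linear_combination h2
  linear_combination (1/2 : ℂ) * h1 - (1/2 : ℂ) * h3

/-- Cauchy–Schwarz for nonnegative forms (squared form). -/
lemma cs {p : X →ₗ[ℂ] X →ₗ⋆[ℂ] ℂ} (hp : IsNNForm p) (x y : X) :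
    ‖p x y‖ ^ 2 ≤ FQ p x * FQ p y := by
  set a := FQ p x with ha
  set b := FQ p y with hb
  have ha0 : 0 ≤ a := FQ_nonneg hp x
  have hb0 : 0 ≤ b := FQ_nonneg hp y
  set z := p x y with hz
  have key : ∀ c : ℂ, 0 ≤ a - 2 * ((starRingEnd ℂ) c * z).re + Complex.normSq c * b := by
    intro c
    have h0 : 0 ≤ (p (x - c • y) (x - c • y)).re := FQ_nonneg hp _
    have hexp : p (x - c • y) (x - c • y)
        = p x x - (starRingEnd ℂ) c * z - c * (starRingEnd ℂ) z
          + (Complex.normSq c : ℂ) * p y y := by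
      have hyx : p y x = (starRingEnd ℂ) z := herm hp x y
      simp only [map_sub, LinearMap.map_smulₛₗ, LinearMap.sub_apply, LinearMap.smul_apply,
        LinearMap.map_smul, smul_eq_mul, hyx, RingHom.id_apply, ← hz]
      rw [Complex.normSq_eq_conj_mul_self]
      push_cast
      ring
    rw [hexp] at h0
    have hre : (p x x - (starRingEnd ℂ) c * z - c * (starRingEnd ℂ) z
        + (Complex.normSq c : ℂ) * p y y).re
        = a - 2 * ((starRingEnd ℂ) c * z).re + Complex.normSq c * b := by
      have h1 : (c * (starRingEnd ℂ) z).re = ((starRingEnd ℂ) c * z).re := by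
        have : c * (starRingEnd ℂ) z = (starRingEnd ℂ) ((starRingEnd ℂ) c * z) := by
          simp [map_mul]
        rw [this, Complex.conj_re]
      simp only [Complex.sub_re, Complex.add_re, Complex.re_ofReal_mul, h1, ha, hb, FQ]
      ring
    rw [hre] at h0
    exact h0
  by_cases hz0 : z = 0
  · simp [hz0]
    positivity
  · set m := ‖z‖ with hm
    have hm0 : 0 < m := by
      rw [hm]; exact norm_pos_iff.mpr hz0
    have key2 : ∀ r : ℝ, 0 ≤ a - 2 * r * m + r ^ 2 * b := by
      intro r
      have := key ((r / m : ℝ) • z)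
      have h1 : ((starRingEnd ℂ) ((r / m : ℝ) • z) * z).re = r * m := by
        rw [Complex.real_smul, map_mul, Complex.conj_ofReal, mul_assoc,
          mul_comm ((starRingEnd ℂ) z) z, Complex.mul_conj,
          ← Complex.ofReal_mul, Complex.ofReal_re, Complex.normSq_eq_norm_sq, ← hm]
        field_simp
      have h2 : Complex.normSq ((r / m : ℝ) • z) = r ^ 2 := by
        rw [Complex.real_smul, Complex.normSq_mul, Complex.normSq_ofReal,
          Complex.normSq_eq_norm_sq, ← hm]
        field_simp
      rw [h1, h2] at this
      linarith [this]
    rcases eq_or_lt_of_le hb0 with hb1 | hb1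
    · -- b = 0
      have hmz : m = 0 := by
        by_contra hne
        have := key2 ((a + 1) / (2 * m))
        rw [← hb1] at this
        have : 0 ≤ a - 2 * ((a + 1) / (2 * m)) * m := by linarith [this]
        have h2m : 2 * ((a + 1) / (2 * m)) * m = a + 1 := by field_simp
        rw [h2m] at this
        linarith
      exact absurd hmz (ne_of_gt hm0)
    · have := key2 (m / b)
      have hcalc : a - 2 * (m / b) * m + (m / b) ^ 2 * b = a - m ^ 2 / b := by
        field_simp; ring
      rw [hcalc] at this
      have hd : m ^ 2 / b ≤ a := by linarith
      rw [div_le_iff₀ hb1] at hd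
      have : m ^ 2 ≤ a * b := hd
      calc ‖z‖ ^ 2 = m ^ 2 := by rw [hm]
        _ ≤ a * b := this

end Aux

section Aux2

variable {X : Type*} [AddCommGroup X] [Module ℂ X]

lemma FQ_add (p q : X →ₗ[ℂ] X →ₗ⋆[ℂ] ℂ) (x : X) : FQ (p + q) x = FQ p x + FQ q x := by
  simp [FQ, LinearMap.add_apply]

lemma FQ_sub (p q : X →ₗ[ℂ] X →ₗ⋆[ℂ] ℂ) (x : X) : FQ (p - q) x = FQ p x - FQ q x := by
  simp [FQ, LinearMap.sub_apply]

lemma FQ_smul (r : ℝ) (p : X →ₗ[ℂ] X →ₗ⋆[ℂ] ℂ) (x : X) : FQ (r • p) x = r * FQ p x := by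
  simp [FQ, LinearMap.smul_apply, Complex.smul_re]

lemma im_smul_form (r : ℝ) (p : X →ₗ[ℂ] X →ₗ⋆[ℂ] ℂ) (x : X) :
    ((r • p) x x).im = r * (p x x).im := by
  simp [LinearMap.smul_apply, Complex.smul_im]

/-- scalar arithmetic for the scaling step -/
lemma scale_bound {W T f c l : ℝ} (hW : 0 ≤ W) (hT : 0 ≤ T) (h1 : -W ≤ f) (h2 : f ≤ T)
    (h3 : c * f ≤ W) (h4 : -T ≤ c * f) (hl0 : 0 < l) (hl1 : l ≤ 1) (hlc : l ≤ c) :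
    -W ≤ l * f ∧ l * f ≤ W ∧ -T ≤ l * f ∧ l * f ≤ T := by
  rcases le_or_gt 0 f with hf | hf
  · exact ⟨by nlinarith, by nlinarith, by nlinarith, by nlinarith⟩
  · exact ⟨by nlinarith, by nlinarith, by nlinarith, by nlinarith⟩

/-- squared Cauchy–Schwarz-type bound for a form squeezed between `±p`. -/
lemma e_sq_bound {p e : X →ₗ[ℂ] X →ₗ⋆[ℂ] ℂ} (hP : IsNNForm (p + e)) (hQ : IsNNForm (p - e))
    (x y : X) : ‖e x y‖ ^ 2 ≤ 4 * (FQ p x * FQ p y) := by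
  set u := (p + e) x y with hu
  set v := (p - e) x y with hv
  have huv : u - v = 2 * e x y := by
    simp only [hu, hv, LinearMap.add_apply, LinearMap.sub_apply]
    ring
  have habs : 2 * ‖e x y‖ ≤ ‖u‖ + ‖v‖ := by
    have h := norm_sub_le_norm_sub_add_norm_sub u 0 v
    simp only [sub_zero, zero_sub, norm_neg] at h
    rw [huv] at h
    rw [norm_mul, Complex.norm_two] at h
    exact h
  have hcs1 := cs hP x y
  have hcs2 := cs hQ x y
  have hPx := FQ_add p e x
  have hPy := FQ_add p e y
  have hQx := FQ_sub p e x
  have hQy := FQ_sub p e y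
  have hP0x := FQ_nonneg hP x
  have hP0y := FQ_nonneg hP y
  have hQ0x := FQ_nonneg hQ x
  have hQ0y := FQ_nonneg hQ y
  have hA0 : 0 ≤ ‖e x y‖ := norm_nonneg _
  have hau : 0 ≤ ‖u‖ := norm_nonneg _
  have hav : 0 ≤ ‖v‖ := norm_nonneg _
  have hWx : 0 ≤ FQ p x := by nlinarith
  have hWy : 0 ≤ FQ p y := by nlinarith
  have hP2x : FQ (p + e) x ≤ 2 * FQ p x := by nlinarith
  have hP2y : FQ (p + e) y ≤ 2 * FQ p y := by nlinarith
  have hQ2x : FQ (p - e) x ≤ 2 * FQ p x := by nlinarith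
  have hQ2y : FQ (p - e) y ≤ 2 * FQ p y := by nlinarith
  have hprod1 : FQ (p + e) x * FQ (p + e) y ≤ (2 * FQ p x) * (2 * FQ p y) :=
    mul_le_mul hP2x hP2y hP0y (by positivity)
  have hprod2 : FQ (p - e) x * FQ (p - e) y ≤ (2 * FQ p x) * (2 * FQ p y) :=
    mul_le_mul hQ2x hQ2y hQ0y (by positivity)
  have hsq : (2 * ‖e x y‖) ^ 2 ≤ (‖u‖ + ‖v‖) ^ 2 :=
    pow_le_pow_left₀ (by positivity) habs 2
  have hstep : (‖u‖ + ‖v‖) ^ 2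
      ≤ 2 * ‖u‖ ^ 2 + 2 * ‖v‖ ^ 2 := by
    nlinarith [sq_nonneg (‖u‖ - ‖v‖)]
  linarith [hsq, hstep, hcs1, hcs2, hprod1, hprod2]

/-- the rank-one form `s(x,y) = κ · e(x,x₀) · conj (e(y,x₀))`. -/
def sForm (e : X →ₗ[ℂ] X →ₗ⋆[ℂ] ℂ) (x₀ : X) (κ : ℝ) : X →ₗ[ℂ] X →ₗ⋆[ℂ] ℂ where
  toFun x :=
    { toFun := fun y => (κ : ℂ) * (e x x₀ * (starRingEnd ℂ) (e y x₀))
      map_add' := fun y z => by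
        simp only [map_add, LinearMap.add_apply, map_add]
        ring
      map_smul' := fun a y => by
        simp only [LinearMap.map_smul, LinearMap.smul_apply, smul_eq_mul, map_mul]
        ring }
  map_add' := fun x z => by
    ext y
    simp only [map_add, LinearMap.add_apply, LinearMap.coe_mk, AddHom.coe_mk]
    ring
  map_smul' := fun a x => by
    ext y
    simp only [LinearMap.map_smul, LinearMap.smul_apply, smul_eq_mul, LinearMap.coe_mk,
      AddHom.coe_mk, RingHom.id_apply]
    ring

lemma sForm_apply (e : X →ₗ[ℂ] X →ₗ⋆[ℂ] ℂ) (x₀ : X) (κ : ℝ) (x y : X) :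
    sForm e x₀ κ x y = (κ : ℂ) * (e x x₀ * (starRingEnd ℂ) (e y x₀)) := rfl

lemma sForm_diag (e : X →ₗ[ℂ] X →ₗ⋆[ℂ] ℂ) (x₀ : X) (κ : ℝ) (x : X) :
    sForm e x₀ κ x x = ((κ * Complex.normSq (e x x₀) : ℝ) : ℂ) := by
  rw [sForm_apply, Complex.mul_conj]
  push_cast
  ring

lemma FQ_sForm (e : X →ₗ[ℂ] X →ₗ⋆[ℂ] ℂ) (x₀ : X) (κ : ℝ) (x : X) :
    FQ (sForm e x₀ κ) x = κ * ‖e x x₀‖ ^ 2 := by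
  rw [FQ, sForm_diag, Complex.ofReal_re, Complex.sq_norm]

end Aux2

set_option maxHeartbeats 1000000 in
theorem extreme_point_iff_singular_forms
    {X : Type*} [AddCommGroup X] [Module ℂ X]
    (t w : X →ₗ[ℂ] X →ₗ⋆[ℂ] ℂ) (ht : IsNNForm t) (hw : IsNNForm w) (hwt : FLe w t) :
    w ∈ Set.extremePoints ℝ {s : X →ₗ[ℂ] X →ₗ⋆[ℂ] ℂ | IsNNForm s ∧ FLe s t} ↔
      SingForm w (t - w) := by
  rw [mem_extremePoints]
  constructor
  · rintro ⟨-, hext⟩ s hs hsw hstw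
    have h1 : (w + s) ∈ {s : X →ₗ[ℂ] X →ₗ⋆[ℂ] ℂ | IsNNForm s ∧ FLe s t} := by
      refine ⟨fun x => ?_, fun x => ?_⟩
      · have : (w + s) x x = w x x + s x x := by simp [LinearMap.add_apply]
        rw [this]
        exact add_nonneg (hw x) (hs x)
      · have hx := hstw x
        rw [FQ_sub] at hx
        rw [FQ_add]
        linarith
    have h2 : (w - s) ∈ {s : X →ₗ[ℂ] X →ₗ⋆[ℂ] ℂ | IsNNForm s ∧ FLe s t} := by
      refine ⟨fun x => ?_, fun x => ?_⟩
      · have hd : (w - s) x x = w x x - s x x := by simp [LinearMap.sub_apply]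
        rw [hd, Complex.le_def]
        constructor
        · have := hsw x
          simp only [FQ] at this
          simp [Complex.sub_re]
          linarith
        · simp [Complex.sub_im, im_eq_zero hw x, im_eq_zero hs x]
      · rw [FQ_sub]
        have := FQ_nonneg hs x
        have := hwt x
        linarith
    have hseg : w ∈ openSegment ℝ (w + s) (w - s) := by
      refine ⟨1/2, 1/2, by norm_num, by norm_num, by norm_num, ?_⟩
      module
    obtain ⟨he1, -⟩ := hext _ h1 _ h2 hseg
    have : s = 0 := by
      have := congrArg (fun u => u - w) he1
      simpa using this
    exact this
  · intro hsing
    refine ⟨⟨hw, hwt⟩, ?_⟩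
    rintro w₁ ⟨hw₁, hw₁t⟩ w₂ ⟨hw₂, hw₂t⟩ ⟨aR, bR, haR, hbR, habR, hsum⟩
    obtain ⟨d, hd⟩ : ∃ d : X →ₗ[ℂ] X →ₗ⋆[ℂ] ℂ, d = w₁ - w := ⟨_, rfl⟩
    have hw₁d : w₁ = w + d := by rw [hd]; abel
    obtain ⟨c, hc⟩ : ∃ c : ℝ, c = aR / bR := ⟨_, rfl⟩
    have hc0 : 0 < c := by rw [hc]; exact div_pos haR hbR
    have hbc : bR * c = aR := by
      rw [hc]; field_simp
    have hw₂d : w₂ = w - c • d := by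
      have hb : bR • w₂ = bR • (w - c • d) := by
        have h1 : bR • w₂ = w - aR • w₁ := eq_sub_of_add_eq' hsum
        rw [h1, hw₁d]
        match_scalars
        · field_simp
          linarith
        · field_simp
          linarith
      calc w₂ = bR⁻¹ • (bR • w₂) := (inv_smul_smul₀ (ne_of_gt hbR) w₂).symm
        _ = bR⁻¹ • (bR • (w - c • d)) := by rw [hb]
        _ = w - c • d := inv_smul_smul₀ (ne_of_gt hbR) _
    -- quadratic inequalities
    have him_d : ∀ x, (d x x).im = 0 := by
      intro x
      rw [hd]
      simp [LinearMap.sub_apply, Complex.sub_im, im_eq_zero hw₁ x, im_eq_zero hw x]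
    have hW0 : ∀ x, 0 ≤ FQ w x := FQ_nonneg hw
    have hT0 : ∀ x, 0 ≤ FQ t x - FQ w x := fun x => by linarith [hwt x]
    have h1 : ∀ x, -(FQ w x) ≤ FQ d x := by
      intro x
      have := FQ_nonneg hw₁ x
      rw [hw₁d, FQ_add] at this
      linarith
    have h2 : ∀ x, FQ d x ≤ FQ t x - FQ w x := by
      intro x
      have := hw₁t x
      rw [hw₁d, FQ_add] at this
      linarith
    have h3 : ∀ x, c * FQ d x ≤ FQ w x := by
      intro x
      have := FQ_nonneg hw₂ x
      rw [hw₂d, FQ_sub, FQ_smul] at this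
      linarith
    have h4 : ∀ x, -(FQ t x - FQ w x) ≤ c * FQ d x := by
      intro x
      have := hw₂t x
      rw [hw₂d, FQ_sub, FQ_smul] at this
      linarith
    obtain ⟨l, hl⟩ : ∃ l : ℝ, l = min 1 c := ⟨_, rfl⟩
    have hl0 : 0 < l := by rw [hl]; exact lt_min one_pos hc0
    have hl1 : l ≤ 1 := by rw [hl]; exact min_le_left _ _
    have hlc : l ≤ c := by rw [hl]; exact min_le_right _ _
    obtain ⟨e, he⟩ : ∃ e : X →ₗ[ℂ] X →ₗ⋆[ℂ] ℂ, e = l • d := ⟨_, rfl⟩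
    have hFQe : ∀ x, FQ e x = l * FQ d x := fun x => by rw [he]; exact FQ_smul l d x
    have him_e : ∀ x, (e x x).im = 0 := fun x => by
      rw [he, im_smul_form, him_d x, mul_zero]
    have hbnd : ∀ x, -(FQ w x) ≤ FQ e x ∧ FQ e x ≤ FQ w x ∧
        -(FQ t x - FQ w x) ≤ FQ e x ∧ FQ e x ≤ FQ t x - FQ w x := by
      intro x
      rw [hFQe]
      exact scale_bound (hW0 x) (hT0 x) (h1 x) (h2 x) (h3 x) (h4 x) hl0 hl1 hlc
    have hP : IsNNForm (w + e) := by
      intro x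
      rw [Complex.le_def]
      constructor
      · have := (hbnd x).1
        simp only [FQ] at this ⊢
        simp only [LinearMap.add_apply, Complex.add_re, Complex.zero_re]
        linarith
      · simp [LinearMap.add_apply, Complex.add_im, im_eq_zero hw x, him_e x]
    have hQ : IsNNForm (w - e) := by
      intro x
      rw [Complex.le_def]
      constructor
      · have := (hbnd x).2.1
        simp only [FQ] at this ⊢
        simp only [LinearMap.sub_apply, Complex.sub_re, Complex.zero_re]
        linarith
      · simp [LinearMap.sub_apply, Complex.sub_im, im_eq_zero hw x, him_e x]
    have hR : IsNNForm ((t - w) + e) := by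
      intro x
      rw [Complex.le_def]
      constructor
      · have := (hbnd x).2.2.1
        simp only [FQ] at this ⊢
        simp only [LinearMap.add_apply, LinearMap.sub_apply, Complex.add_re, Complex.sub_re,
          Complex.zero_re]
        linarith
      · simp [LinearMap.add_apply, LinearMap.sub_apply, Complex.add_im, Complex.sub_im,
          im_eq_zero ht x, im_eq_zero hw x, him_e x]
    have hS : IsNNForm ((t - w) - e) := by
      intro x
      rw [Complex.le_def]
      constructor
      · have := (hbnd x).2.2.2
        simp only [FQ] at this ⊢
        simp only [LinearMap.sub_apply, Complex.sub_re, Complex.zero_re]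
        linarith
      · simp [LinearMap.sub_apply, Complex.sub_im, im_eq_zero ht x, im_eq_zero hw x, him_e x]
    have hEW : ∀ x y, ‖e x y‖ ^ 2 ≤ 4 * (FQ w x * FQ w y) :=
      fun x y => e_sq_bound hP hQ x y
    have hET : ∀ x y, ‖e x y‖ ^ 2 ≤ 4 * ((FQ t x - FQ w x) * (FQ t y - FQ w y)) := by
      intro x y
      have := e_sq_bound hR hS x y
      rwa [FQ_sub] at this
    -- main claim: d = 0
    have hd0 : d = 0 := by
      apply form_eq_zero
      intro x₀
      by_contra hx0
      have hex0 : e x₀ x₀ ≠ 0 := by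
        rw [he]
        simp only [LinearMap.smul_apply]
        exact smul_ne_zero (ne_of_gt hl0) hx0
      have habs0 : 0 < ‖e x₀ x₀‖ := norm_pos_iff.mpr hex0
      have hWpos : 0 < FQ w x₀ := by
        nlinarith [hEW x₀ x₀, hW0 x₀, habs0]
      have htpos : 0 < FQ t x₀ := lt_of_lt_of_le hWpos (hwt x₀)
      obtain ⟨κ, hκ⟩ : ∃ κ : ℝ, κ = 1 / (4 * FQ t x₀) := ⟨_, rfl⟩
      have hκ0 : 0 < κ := by rw [hκ]; positivity
      obtain ⟨s, hs⟩ : ∃ s : X →ₗ[ℂ] X →ₗ⋆[ℂ] ℂ, s = sForm e x₀ κ := ⟨_, rfl⟩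
      have hsNN : IsNNForm s := by
        intro x
        rw [hs, sForm_diag]
        rw [Complex.le_def]
        constructor
        · rw [Complex.ofReal_re, Complex.zero_re]
          exact mul_nonneg hκ0.le (Complex.normSq_nonneg _)
        · rw [Complex.ofReal_im, Complex.zero_im]
      have hsw : FLe s w := by
        intro x
        rw [hs, FQ_sForm]
        have hb := hEW x x₀
        have hW0x := hW0 x
        have hWle : FQ w x₀ ≤ FQ t x₀ := hwt x₀
        have hA : κ * ‖e x x₀‖ ^ 2 ≤ κ * (4 * (FQ w x * FQ w x₀)) :=
          mul_le_mul_of_nonneg_left hb hκ0.le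
        have h1 : κ * (4 * (FQ w x * FQ w x₀)) ≤ κ * (4 * (FQ w x * FQ t x₀)) :=
          mul_le_mul_of_nonneg_left (mul_le_mul_of_nonneg_left
            (mul_le_mul_of_nonneg_left hWle hW0x) (by norm_num : (0:ℝ) ≤ 4)) hκ0.le
        have h2 : κ * (4 * (FQ w x * FQ t x₀)) = FQ w x := by
          rw [hκ]
          field_simp
        linarith
      have hstw : FLe s (t - w) := by
        intro x
        rw [hs, FQ_sForm, FQ_sub]
        have hb := hET x x₀
        have hT0x := hT0 x
        have hW00 := hW0 x₀
        have hA : κ * ‖e x x₀‖ ^ 2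
            ≤ κ * (4 * ((FQ t x - FQ w x) * (FQ t x₀ - FQ w x₀))) :=
          mul_le_mul_of_nonneg_left hb hκ0.le
        have hle2 : FQ t x₀ - FQ w x₀ ≤ FQ t x₀ := by linarith
        have h1 : κ * (4 * ((FQ t x - FQ w x) * (FQ t x₀ - FQ w x₀)))
            ≤ κ * (4 * ((FQ t x - FQ w x) * FQ t x₀)) :=
          mul_le_mul_of_nonneg_left (mul_le_mul_of_nonneg_left
            (mul_le_mul_of_nonneg_left hle2 hT0x) (by norm_num : (0:ℝ) ≤ 4)) hκ0.le
        have h2 : κ * (4 * ((FQ t x - FQ w x) * FQ t x₀)) = FQ t x - FQ w x := by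
          rw [hκ]
          field_simp
        linarith
      have hzero := hsing s hsNN hsw hstw
      have : s x₀ x₀ = 0 := by rw [hzero]; simp
      rw [hs, sForm_diag] at this
      have hre : κ * Complex.normSq (e x₀ x₀) = 0 := by
        exact_mod_cast congrArg Complex.re this
      have : Complex.normSq (e x₀ x₀) ≠ 0 := by
        rw [Complex.normSq_eq_norm_sq]
        positivity
      have := mul_ne_zero (ne_of_gt hκ0) this
      exact this hre
    have hw₁w : w₁ = w := by
      have h : w₁ - w = 0 := by rw [← hd]; exact hd0
      exact sub_eq_zero.mp h
    refine ⟨hw₁w, ?_⟩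
    rw [hw₂d, hd0]
    simp
end

section
/- Let t, w, u be nonnegative forms on a complex vector space X such that w is a t-quasi-unit (w[x] = sup_{n∈ℕ} inf_{y∈X} (t[x−y] + n·w[y]) for all x) and u ≤ t. Let p be a nonnegative form with p[x] = sup_{n∈ℕ} inf_{y∈X} (u[x−y] + n·w[y]) for all x ∈ X (i.e. p = D_w u). Then p is the greatest lower bound of w and u in the set of all nonnegative forms on X: p ≤ w, p ≤ u, and every nonnegative form s with s ≤ w and s ≤ u satisfies s ≤ p. -/
open scoped ComplexOrder

lemma FQ_nonneg_s14 {X : Type*} [AddCommGroup X] [Module ℂ X]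
    {t : X →ₗ[ℂ] X →ₗ⋆[ℂ] ℂ} (ht : IsNNForm t) (x : X) : 0 ≤ FQ t x := by
  have := ht x
  rw [Complex.le_def] at this
  simpa [FQ] using this.1

lemma FQ_zero {X : Type*} [AddCommGroup X] [Module ℂ X]
    (t : X →ₗ[ℂ] X →ₗ⋆[ℂ] ℂ) : FQ t 0 = 0 := by
  simp [FQ]

lemma FQ_key {X : Type*} [AddCommGroup X] [Module ℂ X]
    {s : X →ₗ[ℂ] X →ₗ⋆[ℂ] ℂ} (hs : IsNNForm s) (n : ℕ) (x y : X) :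
    ((n : ℝ)/(n+1)) * FQ s x ≤ FQ s (x - y) + (n : ℝ) * FQ s y := by
  have h0 : 0 ≤ FQ s ((x - y) - (n : ℂ) • y) := FQ_nonneg_s14 hs _
  have hx : x = (x - y) + y := by abel
  set v := x - y
  have e1 : FQ s x = FQ s v + ((s v y).re + (s y v).re) + FQ s y := by
    rw [hx]
    simp [FQ, map_add]
    ring
  have e2 : FQ s (v - (n : ℂ) • y)
      = FQ s v - (n : ℝ) * ((s v y).re + (s y v).re) + (n : ℝ)^2 * FQ s y := by
    simp [FQ, map_sub, map_smul, map_smulₛₗ, Complex.sub_re, Complex.mul_re]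
    ring
  rw [e2] at h0
  rw [e1, div_mul_eq_mul_div, div_le_iff₀ (by positivity)]
  nlinarith [FQ_nonneg_s14 hs v, FQ_nonneg_s14 hs y, sq_nonneg ((n:ℝ))]
theorem inf_with_quasi_unit_exists
    {X : Type*} [AddCommGroup X] [Module ℂ X]
    (t w u p : X →ₗ[ℂ] X →ₗ⋆[ℂ] ℂ)
    (ht : IsNNForm t) (hw : IsNNForm w) (hu : IsNNForm u) (hp : IsNNForm p)
    (hwq : ∀ x : X, FQ w x = ⨆ n : ℕ, ⨅ y : X, (FQ t (x - y) + (n : ℝ) * FQ w y))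
    (hut : FLe u t)
    (hpd : ∀ x : X, FQ p x = ⨆ n : ℕ, ⨅ y : X, (FQ u (x - y) + (n : ℝ) * FQ w y)) :
    FLe p w ∧ FLe p u ∧
      ∀ s : X →ₗ[ℂ] X →ₗ⋆[ℂ] ℂ, IsNNForm s → FLe s w → FLe s u → FLe s p := by
  have hbd : ∀ x : X, ∀ n : ℕ, BddBelow (Set.range fun y => FQ u (x - y) + (n : ℝ) * FQ w y) := by
    intro x n
    refine ⟨0, ?_⟩
    rintro _ ⟨y, rfl⟩
    dsimp only
    have h1 := FQ_nonneg_s14 hu (x - y)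
    have h1t := FQ_nonneg_s14 ht (x - y)
    have h2 := FQ_nonneg_s14 hw y
    have : (0:ℝ) ≤ (n:ℝ) * FQ w y := by positivity
    first
    | linarith [h1]
    | linarith [h1t]
  have hbdt : ∀ x : X, ∀ n : ℕ, BddBelow (Set.range fun y => FQ t (x - y) + (n : ℝ) * FQ w y) := by
    intro x n
    refine ⟨0, ?_⟩
    rintro _ ⟨y, rfl⟩
    dsimp only
    have h1 := FQ_nonneg_s14 hu (x - y)
    have h1t := FQ_nonneg_s14 ht (x - y)
    have h2 := FQ_nonneg_s14 hw y
    have : (0:ℝ) ≤ (n:ℝ) * FQ w y := by positivity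
    first
    | linarith [h1]
    | linarith [h1t]
  -- F n ≤ u[x]
  have hFle : ∀ x : X, ∀ n : ℕ, (⨅ y : X, (FQ u (x - y) + (n : ℝ) * FQ w y)) ≤ FQ u x := by
    intro x n
    have := ciInf_le (hbd x n) (0 : X)
    simpa [FQ_zero] using this
  simp only [FLe]
  refine ⟨?_, ?_, ?_⟩
  · -- p ≤ w
    intro x
    rw [hpd x, hwq x]
    have hGle : ∀ n : ℕ, (⨅ y : X, (FQ t (x - y) + (n : ℝ) * FQ w y)) ≤ FQ t x := by
      intro n
      have := ciInf_le (hbdt x n) (0 : X)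
      simpa [FQ_zero] using this
    refine ciSup_mono ⟨FQ t x, by rintro _ ⟨n, rfl⟩; exact hGle n⟩ ?_
    intro n
    exact ciInf_mono (hbd x n) fun y => by
      have := hut (x - y); linarith
  · -- p ≤ u
    intro x
    rw [hpd x]
    exact ciSup_le fun n => hFle x n
  · -- greatest lower bound
    intro s hs hsw hsu x
    rw [hpd x]
    have hmem : ∀ n : ℕ, ((n : ℝ)/(n+1)) * FQ s x
        ≤ ⨅ y : X, (FQ u (x - y) + (n : ℝ) * FQ w y) := by
      intro n
      refine le_ciInf fun y => ?_
      calc ((n : ℝ)/(n+1)) * FQ s x ≤ FQ s (x - y) + (n : ℝ) * FQ s y := FQ_key hs n x y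
        _ ≤ FQ u (x - y) + (n : ℝ) * FQ w y := by
            have h1 := hsu (x - y)
            have h2 := hsw y
            have : (n : ℝ) * FQ s y ≤ (n : ℝ) * FQ w y :=
              mul_le_mul_of_nonneg_left h2 (by positivity)
            linarith
    have hbdA : BddAbove (Set.range fun n : ℕ => ⨅ y : X, (FQ u (x - y) + (n : ℝ) * FQ w y)) :=
      ⟨FQ u x, by rintro _ ⟨n, rfl⟩; exact hFle x n⟩
    have htend : Filter.Tendsto (fun n : ℕ => ((n : ℝ)/(n+1)) * FQ s x)
        Filter.atTop (nhds (FQ s x)) := by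
      have h1 : Filter.Tendsto (fun n : ℕ => ((n : ℝ)/(n+1))) Filter.atTop (nhds 1) := by
        have : ∀ n : ℕ, ((n : ℝ)/(n+1)) = 1 - 1/((n:ℝ)+1) := by
          intro n; field_simp; ring
        simp_rw [this]
        have := tendsto_one_div_add_atTop_nhds_zero_nat (𝕜 := ℝ)
        simpa using (tendsto_const_nhds.sub this)
      simpa using h1.mul_const (FQ s x)
    refine le_of_tendsto htend (Filter.Eventually.of_forall fun n => ?_)
    exact (hmem n).trans (le_ciSup hbdA n)
end
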